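/- arXiv:2005.05833 — 10 statements merged into one kernel-verified Lean document; each statement's English description precedes it below -/
import Mathlib

section
/- Let k be a field of characteristic p > 0, let k[X^{1/p^∞}] be the k-subalgebra of an algebraic closure of k(X) generated by all p-power roots of X, and let A = k[X^{1/p^∞}]/(X). Then the module of Kähler differentials Ω_{A/k} is zero, but A is not reduced. -/
set_option maxHeartbeats 1000000
set_option synthInstance.maxHeartbeats 400000


/-- Example 2.1: the non-reduced formally unramified algebra
`A = k[X^{1/p^∞}]/(X)` in characteristic `p`.  Here `r n` is a compatible
choice of `p^n`-th roots of `X` in an algebraic closure of `k(X)`. -/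
theorem stmt0 (p : ℕ) [Fact p.Prime] (k : Type) [Field k] [CharP k p]
    (r : ℕ → AlgebraicClosure (RatFunc k))
    (hr0 : r 0 = algebraMap (RatFunc k) (AlgebraicClosure (RatFunc k)) RatFunc.X)
    (hr : ∀ n, r (n + 1) ^ p = r n) :
    Subsingleton (KaehlerDifferential k
      ((Algebra.adjoin k (Set.range r)) ⧸
        (Ideal.span {(⟨r 0, Algebra.subset_adjoin (Set.mem_range_self 0)⟩ :
          Algebra.adjoin k (Set.range r))}))) ∧
    ¬ IsReduced ((Algebra.adjoin k (Set.range r)) ⧸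
        (Ideal.span {(⟨r 0, Algebra.subset_adjoin (Set.mem_range_self 0)⟩ :
          Algebra.adjoin k (Set.range r))})) := by
  have hp1 : 1 < p := (Fact.out : p.Prime).one_lt
  set R := Algebra.adjoin k (Set.range r) with hR
  set x : ℕ → R := fun n => ⟨r n, Algebra.subset_adjoin (Set.mem_range_self n)⟩ with hx
  set I : Ideal R := Ideal.span {x 0} with hI
  -- compatible powers
  have hpow : ∀ m d, r m = r (m + d) ^ p ^ d := by
    intro m d
    induction d with
    | zero => simp
    | succ d ih =>
      rw [ih, ← hr (m + d), ← pow_mul, ← pow_succ']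
      rfl
  have hxpow : ∀ m d, x m = x (m + d) ^ p ^ d := by
    intro m d
    apply Subtype.ext
    rw [SubmonoidClass.coe_pow]
    exact hpow m d
  -- the quotient map
  set π : R →ₐ[k] R ⧸ I := Ideal.Quotient.mkₐ k I with hπ
  constructor
  · -- Kähler differentials vanish
    set D := KaehlerDifferential.D k (R ⧸ I) with hD
    have hpA : (p : R ⧸ I) = 0 := by
      rw [← map_natCast (algebraMap k (R ⧸ I)) p, CharP.cast_eq_zero k p, map_zero]
    have hDgen : ∀ n, D (π (x n)) = 0 := by
      intro n
      have : π (x n) = π (x (n + 1)) ^ p := by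
        rw [← map_pow, hxpow n 1, pow_one]
      rw [this, Derivation.leibniz_pow]
      rw [← Nat.cast_smul_eq_nsmul (R ⧸ I), hpA]
      exact zero_smul (R ⧸ I) (π (x (n + 1)) ^ (p - 1) • D (π (x (n + 1))))
    -- the images of x n generate R ⧸ I
    have htop : Algebra.adjoin k (Set.range fun n => π (x n)) = ⊤ := by
      have h1 : Algebra.adjoin k ((Subtype.val ⁻¹' Set.range r : Set R)) = ⊤ :=
        Algebra.adjoin_adjoin_coe_preimage
      have h2 : Subalgebra.map π (Algebra.adjoin k (Subtype.val ⁻¹' Set.range r)) =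
          Algebra.adjoin k (π '' (Subtype.val ⁻¹' Set.range r)) := AlgHom.map_adjoin π _
      rw [h1] at h2
      have h3 : Subalgebra.map π ⊤ = ⊤ := by
        rw [Algebra.map_top]
        exact (AlgHom.range_eq_top π).mpr (Ideal.Quotient.mkₐ_surjective k I)
      rw [h3] at h2
      apply top_le_iff.mp
      rw [h2]
      apply Algebra.adjoin_le
      rintro _ ⟨⟨a, ha⟩, ⟨n, hn⟩, rfl⟩
      have : (⟨a, ha⟩ : R) = x n := by ext; exact hn.symm
      rw [this]
      exact Algebra.subset_adjoin ⟨n, rfl⟩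
    have hDzero : ∀ a : R ⧸ I, D a = 0 := by
      intro a
      have hEq : Set.EqOn ⇑D ⇑(0 : Derivation k (R ⧸ I) (Ω[R ⧸ I⁄k]))
          (Set.range fun n => π (x n)) := by
        rintro _ ⟨n, rfl⟩
        simpa using hDgen n
      have ha : a ∈ Algebra.adjoin k (Set.range fun n => π (x n)) := by
        rw [htop]; trivial
      simpa using Derivation.eqOn_adjoin hEq ha
    have : ∀ ω : KaehlerDifferential k (R ⧸ I), ω = 0 := by
      intro ω
      have h1 : ω ∈ (⊤ : Submodule (R ⧸ I) (KaehlerDifferential k (R ⧸ I))) := trivial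
      rw [← KaehlerDifferential.span_range_derivation] at h1
      have h2 : Set.range ⇑D ⊆ {0} := by rintro _ ⟨a, rfl⟩; exact hDzero a
      have := Submodule.span_mono (R := R ⧸ I) h2 h1
      simpa using this
    exact subsingleton_of_forall_eq 0 fun y => this y
  · -- not reduced
    intro hred
    have hnil : IsNilpotent (π (x 1)) := by
      refine ⟨p, ?_⟩
      rw [← map_pow]
      have h01 : x 1 ^ p = x 0 := by simpa using (hxpow 0 1).symm
      rw [h01, hπ]
      simp only [Ideal.Quotient.mkₐ_eq_mk]
      rw [Ideal.Quotient.eq_zero_iff_mem]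
      exact Ideal.mem_span_singleton_self _
    have hz : π (x 1) = 0 := hnil.eq_zero
    rw [hπ] at hz
    simp only [Ideal.Quotient.mkₐ_eq_mk] at hz
    rw [Ideal.Quotient.eq_zero_iff_mem, hI, Ideal.mem_span_singleton] at hz
    obtain ⟨c, hc⟩ := hz
    -- push to (AlgebraicClosure (RatFunc k))
    have hcA : r 1 = r 0 * (c : (AlgebraicClosure (RatFunc k))) := by
      have := congrArg (Subtype.val) hc
      push_cast at this
      exact this
    -- c lies in some adjoin k {r n}
    set S : ℕ → Subalgebra k (AlgebraicClosure (RatFunc k)) := fun n => Algebra.adjoin k {r n} with hS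
    have hmono : Monotone S := by
      intro m n hmn
      apply Algebra.adjoin_le
      intro y hy
      rw [Set.mem_singleton_iff] at hy
      subst hy
      have : r m = r n ^ p ^ (n - m) := by
        have := hpow m (n - m)
        rwa [Nat.add_sub_cancel' hmn] at this
      rw [this]
      exact pow_mem (Algebra.self_mem_adjoin_singleton k (r n)) _
    have hsub : R ≤ ⨆ n, S n := by
      apply Algebra.adjoin_le
      rintro _ ⟨n, rfl⟩
      exact (le_iSup S n) (Algebra.self_mem_adjoin_singleton k (r n))
    have hcmem : (c : (AlgebraicClosure (RatFunc k))) ∈ ⨆ n, S n := hsub c.2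
    have : (c : (AlgebraicClosure (RatFunc k))) ∈ ⋃ n, (S n : Set (AlgebraicClosure (RatFunc k))) := by
      rwa [← Subalgebra.coe_iSup_of_directed hmono.directed_le]
    obtain ⟨_, ⟨N, rfl⟩, hcN⟩ := this
    set n := N + 1 with hn
    have hcN' : (c : (AlgebraicClosure (RatFunc k))) ∈ S n := hmono (Nat.le_succ N) hcN
    have hcN2 : (c : (AlgebraicClosure (RatFunc k))) ∈
        Algebra.adjoin k ({r n} : Set (AlgebraicClosure (RatFunc k))) := hcN'
    rw [Algebra.adjoin_singleton_eq_range_aeval] at hcN2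
    obtain ⟨f, hf⟩ := hcN2
    set t := r n with ht
    -- transcendence of t
    have htr : Transcendental k t := by
      intro halg
      have hint : IsIntegral k t := isAlgebraic_iff_isIntegral.mp halg
      have h0 : IsAlgebraic k (r 0) := by
        rw [hpow 0 n, Nat.zero_add]
        exact isAlgebraic_iff_isIntegral.mpr (hint.pow _)
      rw [hr0] at h0
      have hX : Transcendental k (RatFunc.X (K := k)) := by
        rw [← RatFunc.algebraMap_X]
        exact (transcendental_algebraMap_iff
          (IsFractionRing.injective (Polynomial k) (RatFunc k))).mpr
          (Polynomial.transcendental_X k)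
      have h2 : Transcendental k
          ((algebraMap (RatFunc k) (AlgebraicClosure (RatFunc k))) RatFunc.X) :=
        (transcendental_algebraMap_iff (R := k) (S := RatFunc k)
          (A := AlgebraicClosure (RatFunc k))
          ((algebraMap (RatFunc k) (AlgebraicClosure (RatFunc k))).injective)).mpr hX
      exact h2 h0
    -- turn equation into polynomial identity
    have heq : Polynomial.aeval t ((Polynomial.X : Polynomial k) ^ p ^ (n - 1)) =
        Polynomial.aeval t ((Polynomial.X : Polynomial k) ^ p ^ n * f) := by
      have hf' : Polynomial.aeval t f = (c : (AlgebraicClosure (RatFunc k))) := hf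
      simp only [map_mul, map_pow, Polynomial.aeval_X]
      rw [hf']
      have h1 : r 1 = t ^ p ^ (n - 1) := by
        have := hpow 1 (n - 1)
        rwa [show 1 + (n - 1) = n by omega] at this
      have h0 : r 0 = t ^ p ^ n := by
        have := hpow 0 n
        rwa [Nat.zero_add] at this
      rw [← h1, ← h0, ← hcA]
    have hpoly : (Polynomial.X : Polynomial k) ^ p ^ (n - 1) =
        Polynomial.X ^ p ^ n * f := by
      exact transcendental_iff_injective.mp htr heq
    -- degree contradiction
    rcases eq_or_ne f 0 with rfl | hf0
    · rw [mul_zero] at hpoly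
      exact pow_ne_zero _ Polynomial.X_ne_zero hpoly
    · have hd := congrArg Polynomial.natDegree hpoly
      rw [Polynomial.natDegree_X_pow, Polynomial.natDegree_mul
        (pow_ne_zero _ Polynomial.X_ne_zero) hf0, Polynomial.natDegree_X_pow] at hd
      have : p ^ (n - 1) < p ^ n := Nat.pow_lt_pow_right hp1 (by omega)
      omega
end

section
/- Let k be a field of characteristic zero, n ≥ 5, F = X²Y² + X^n + Y^n ∈ k[[X,Y]], and B = k[[X,Y]]/(∂F/∂X, ∂F/∂Y). Let f denote the image of F in B. Then f ≠ 0 but f² = 0. -/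
open MvPowerSeries Finsupp

private noncomputable def dd (a b : ℕ) : Fin 2 →₀ ℕ := Finsupp.single 0 a + Finsupp.single 1 b

private lemma dd_apply0 (a b : ℕ) : dd a b 0 = a := by
  simp [dd, Finsupp.single_apply]

private lemma dd_apply1 (a b : ℕ) : dd a b 1 = b := by
  simp [dd, Finsupp.single_apply]

private lemma dd_le {a b c d : ℕ} : dd c d ≤ dd a b ↔ c ≤ a ∧ d ≤ b := by
  rw [Finsupp.le_def]
  constructor
  · intro h
    exact ⟨by simpa [dd_apply0] using h 0, by simpa [dd_apply1] using h 1⟩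
  · rintro ⟨h1, h2⟩ i
    fin_cases i
    · simpa [dd_apply0] using h1
    · simpa [dd_apply1] using h2

private lemma dd_sub (a b c d : ℕ) : dd a b - dd c d = dd (a - c) (b - d) := by
  ext i
  fin_cases i
  · simp [Finsupp.tsub_apply, dd_apply0]
  · simp [Finsupp.tsub_apply, dd_apply1]

private lemma coeff_aux {k : Type} [Field k] (g : MvPowerSeries (Fin 2) k) (a b c d : ℕ) :
    MvPowerSeries.coeff (dd a b) (g * (X (0 : Fin 2) ^ c * X 1 ^ d)) =
      if c ≤ a ∧ d ≤ b then MvPowerSeries.coeff (dd (a - c) (b - d)) g else 0 := by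
  rw [X_pow_eq, X_pow_eq, monomial_mul_monomial, one_mul]
  rw [show (Finsupp.single (0 : Fin 2) c + Finsupp.single 1 d) = dd c d from rfl]
  rw [coeff_mul_monomial, dd_sub]
  by_cases h : c ≤ a ∧ d ≤ b
  · rw [if_pos (dd_le.mpr h), if_pos h, mul_one]
  · rw [if_neg (fun hh => h (dd_le.mp hh)), if_neg h]

private lemma dd_zero : dd 0 0 = 0 := by
  simp [dd]

private lemma coeff_dd00_one {k : Type} [Field k] :
    MvPowerSeries.coeff (dd 0 0) (1 : MvPowerSeries (Fin 2) k) = 1 := by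
  rw [dd_zero, coeff_zero_eq_constantCoeff_apply, map_one]

private lemma coeff_nat_mul {k : Type} [Field k] (q : ℕ) (j : Fin 2 →₀ ℕ)
    (z : MvPowerSeries (Fin 2) k) :
    MvPowerSeries.coeff j ((q : MvPowerSeries (Fin 2) k) * z) =
      (q : k) * MvPowerSeries.coeff j z := by
  rw [← map_natCast (C (σ := Fin 2) (R := k)) q, coeff_C_mul]

private lemma part1 {k : Type} [Field k] [CharZero k] (m : ℕ) :
    (X 0 ^ 2 * X 1 ^ 2 + X 0 ^ (5+m) + X 1 ^ (5+m) : MvPowerSeries (Fin 2) k) ∉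
      Ideal.span {2 * X (0:Fin 2) * X 1 ^ 2 +
          ((5+m : ℕ) : MvPowerSeries (Fin 2) k) * X 0 ^ (4+m),
        2 * X (0:Fin 2) ^ 2 * X 1 +
          ((5+m : ℕ) : MvPowerSeries (Fin 2) k) * X 1 ^ (4+m)} := by
  intro hmem
  obtain ⟨a, b, hab⟩ := Ideal.mem_span_pair.mp hmem
  have hab' : ((2:ℕ) : MvPowerSeries (Fin 2) k) * (a * (X 0 ^ 1 * X 1 ^ 2)) +
      ((5+m:ℕ) : MvPowerSeries (Fin 2) k) * (a * (X 0 ^ (4+m) * X 1 ^ 0)) +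
      (((2:ℕ) : MvPowerSeries (Fin 2) k) * (b * (X 0 ^ 2 * X 1 ^ 1)) +
      ((5+m:ℕ) : MvPowerSeries (Fin 2) k) * (b * (X 0 ^ 0 * X 1 ^ (4+m)))) =
      1 * (X 0 ^ 2 * X 1 ^ 2) + 1 * (X (0:Fin 2) ^ (5+m) * X 1 ^ 0) +
        1 * (X (0:Fin 2) ^ 0 * X 1 ^ (5+m)) := by
    push_cast at hab ⊢
    linear_combination hab
  have hc1 : ¬ (4 + m ≤ 2) := by omega
  have hc2 : ¬ (5 + m ≤ 2) := by omega
  have hc3 : ¬ (5 + m ≤ 0) := by omega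
  have hc4 : 5 + m - (4 + m) = 1 := by omega
  have e1 := congrArg (MvPowerSeries.coeff (dd 2 2)) hab'
  have e2 := congrArg (MvPowerSeries.coeff (dd (5+m) 0)) hab'
  have e3 := congrArg (MvPowerSeries.coeff (dd 0 (5+m))) hab'
  simp only [map_add, coeff_nat_mul, coeff_aux] at e1 e2 e3
  norm_num [hc1, hc2, hc3, hc4, coeff_dd00_one] at e1 e2 e3
  set A := MvPowerSeries.coeff (dd 1 0) a
  set B := MvPowerSeries.coeff (dd 0 1) b
  have h4 : ((4:ℕ) : k) = ((5+m : ℕ) : k) := by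
    push_cast at e1 e2 e3 ⊢
    linear_combination ((m:k)+5) * e1 - 2 * e2 - 2 * e3
  have := Nat.cast_inj (R := k) |>.mp h4
  omega

private lemma isUnit_nat {k : Type} [Field k] [CharZero k] (q : ℕ) (hq : q ≠ 0) :
    IsUnit ((q : ℕ) : MvPowerSeries (Fin 2) k) := by
  rw [MvPowerSeries.isUnit_iff_constantCoeff, map_natCast]
  exact isUnit_iff_ne_zero.mpr (Nat.cast_ne_zero.mpr hq)

private lemma part2 {k : Type} [Field k] [CharZero k] (m : ℕ)
    (J : Ideal (MvPowerSeries (Fin 2) k))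
    (hu : 2 * X (0:Fin 2) * X 1 ^ 2 +
        ((5+m : ℕ) : MvPowerSeries (Fin 2) k) * X 0 ^ (4+m) ∈ J)
    (hv : 2 * X (0:Fin 2) ^ 2 * X 1 +
        ((5+m : ℕ) : MvPowerSeries (Fin 2) k) * X 1 ^ (4+m) ∈ J) :
    (X 0 ^ 2 * X 1 ^ 2 + X 0 ^ (5+m) + X 1 ^ (5+m) : MvPowerSeries (Fin 2) k) ^ 2 ∈ J := by
  set R := MvPowerSeries (Fin 2) k
  set x : R := X 0 with hx
  set y : R := X 1 with hy
  set N : R := ((5+m : ℕ) : R) with hN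
  have unit_cancel : ∀ w z : R, IsUnit w → w * z ∈ J → z ∈ J := by
    intro w z hw h
    exact (J.unit_mul_mem_iff_mem hw).mp h
  -- x^n - y^n ∈ J
  have hw : x ^ (5+m) - y ^ (5+m) ∈ J := by
    apply unit_cancel N _ (isUnit_nat _ (by omega))
    have hid : N * (x ^ (5+m) - y ^ (5+m)) =
        x * (2 * x * y ^ 2 + N * x ^ (4+m)) - y * (2 * x ^ 2 * y + N * y ^ (4+m)) := by
      rw [hN]; push_cast; ring
    rw [hid]
    exact sub_mem (J.mul_mem_left _ hu) (J.mul_mem_left _ hv)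
  -- the descending chain in y
  have key : ∀ i j : ℕ,
      (2:R) ^ i * x ^ (2*i) * y ^ (j+1) - (-N) ^ i * y ^ (j+1+i*(3+m)) ∈ J := by
    intro i
    induction i with
    | zero =>
      intro j
      rw [show (2:R) ^ 0 * x ^ (2*0) * y ^ (j+1) - (-N) ^ 0 * y ^ (j+1+0*(3+m)) = 0 by ring]
      exact J.zero_mem
    | succ i ih =>
      intro j
      have hid : (2:R) ^ (i+1) * x ^ (2*(i+1)) * y ^ (j+1) - (-N) ^ (i+1) * y ^ (j+1+(i+1)*(3+m))
          = ((2:R) ^ i * x ^ (2*i) * y ^ j) * (2 * x ^ 2 * y + N * y ^ (4+m))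
            - N * ((2:R) ^ i * x ^ (2*i) * y ^ ((j+3+m)+1)
                - (-N) ^ i * y ^ ((j+3+m)+1+i*(3+m))) := by
        rw [hN]; push_cast; ring
      rw [hid]
      exact sub_mem (J.mul_mem_left _ hv) (J.mul_mem_left _ (ih (j+3+m)))
  -- from a suitable relation, conclude y^(2n) ∈ J
  have main : ∀ K e : ℕ, e ≠ 0 →
      (2:R) ^ K * (x ^ (5+m) * y ^ (5+m)) - (-N) ^ K * y ^ (2*(5+m)+e) ∈ J →
      y ^ (2*(5+m)) ∈ J := by
    intro K e he hmem2
    apply unit_cancel ((2:R) ^ K - (-N) ^ K * y ^ e)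
    · rw [MvPowerSeries.isUnit_iff_constantCoeff]
      have : constantCoeff (σ := Fin 2) (R := k) ((2:R) ^ K - (-N) ^ K * y ^ e) = (2:k) ^ K := by
        rw [hN, hy]
        simp [map_pow, zero_pow he, map_ofNat]
      rw [this]
      exact isUnit_iff_ne_zero.mpr (pow_ne_zero _ two_ne_zero)
    · have hcomb := add_mem hmem2
        (J.mul_mem_left ((2:R) ^ K) (J.mul_mem_left (-(y ^ (5+m))) hw))
      convert hcomb using 1
      ring
  have hy2n : y ^ (2*(5+m)) ∈ J := by
    rcases Nat.even_or_odd m with ⟨t, ht⟩ | ⟨t, ht⟩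
    · -- m = t + t, n = 5 + 2t odd
      subst ht
      refine main (2*t+5) (4*t^2+12*t+5) (by omega) ?_
      have hA := J.mul_mem_left x (key (t+2) (4+2*t))
      have hB := J.mul_mem_left (y ^ (2*t^2+9*t+9)) hu
      have hC := key (t+2) (2*t^2+9*t+8)
      have hcomb := sub_mem
        (add_mem (J.mul_mem_left ((2:R) ^ (t+3)) hA)
          (J.mul_mem_left ((2:R) ^ (t+2) * (-N) ^ (t+2)) hB))
        (J.mul_mem_left (N * (-N) ^ (t+2)) hC)
      convert hcomb using 1
      rw [hN]; push_cast; ring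
    · -- m = 2t + 1, n = 2t + 6 even
      subst ht
      refine main (t+3) (2*t^2+8*t+6) (by omega) ?_
      convert key (t+3) (2*t+5) using 1
      rw [hN]; push_cast; ring
  have hx4y4 : x ^ 4 * y ^ 4 ∈ J := by
    apply unit_cancel (((4:ℕ) : R)) _ (isUnit_nat _ (by omega))
    have hcomb := add_mem (key 2 3) (J.mul_mem_left ((-N) ^ 2) hy2n)
    convert hcomb using 1
    rw [hN]; push_cast; ring
  apply unit_cancel ((((5+m)*(5+m) : ℕ)) : R) _ (isUnit_nat _ (by positivity))
  have hcomb := add_mem (add_mem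
      (J.mul_mem_left (x ^ 2 * (2 * x * y ^ 2 + N * x ^ (4+m)) + 2 * x * y * (2 * x ^ 2 * y + N * y ^ (4+m)) + 2 * ((1+m : ℕ) : R) * x ^ 3 * y ^ 2) hu)
      (J.mul_mem_left (y ^ 2 * (2 * x ^ 2 * y + N * y ^ (4+m)) + 2 * ((1+m : ℕ) : R) * x ^ 2 * y ^ 3) hv))
    (J.mul_mem_left ((((1+m : ℕ)) : R) ^ 2) hx4y4)
  convert hcomb using 1
  rw [hN, Nat.cast_mul]; push_cast; ring

/-- Lemma 2.4(ii): the image `f` of `F = X²Y² + Xⁿ + Yⁿ` in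
`B = k[[X,Y]]/(∂F/∂X, ∂F/∂Y)` is nonzero with `f² = 0`. -/
theorem stmt2 (k : Type) [Field k] [CharZero k] (n : ℕ) (hn : 5 ≤ n) :
    (Ideal.Quotient.mk
        (Ideal.span
          {2 * X (0 : Fin 2) * X 1 ^ 2 + (n : MvPowerSeries (Fin 2) k) * X 0 ^ (n - 1),
           2 * X (0 : Fin 2) ^ 2 * X 1 + (n : MvPowerSeries (Fin 2) k) * X 1 ^ (n - 1)} :
          Ideal (MvPowerSeries (Fin 2) k))
        (X 0 ^ 2 * X 1 ^ 2 + X 0 ^ n + X 1 ^ n) ≠ 0) ∧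
    (Ideal.Quotient.mk
        (Ideal.span
          {2 * X (0 : Fin 2) * X 1 ^ 2 + (n : MvPowerSeries (Fin 2) k) * X 0 ^ (n - 1),
           2 * X (0 : Fin 2) ^ 2 * X 1 + (n : MvPowerSeries (Fin 2) k) * X 1 ^ (n - 1)} :
          Ideal (MvPowerSeries (Fin 2) k))
        (X 0 ^ 2 * X 1 ^ 2 + X 0 ^ n + X 1 ^ n)) ^ 2 = 0 := by
  obtain ⟨m, rfl⟩ := Nat.exists_eq_add_of_le hn
  rw [show 5 + m - 1 = 4 + m from by omega]
  constructor
  · rw [Ne, Ideal.Quotient.eq_zero_iff_mem]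
    exact part1 m
  · rw [← map_pow, Ideal.Quotient.eq_zero_iff_mem]
    exact part2 m _ (Ideal.subset_span (Set.mem_insert _ _))
      (Ideal.subset_span (Set.mem_insert_of_mem _ rfl))
end

section
/- Let k be a field of characteristic zero, n ≥ 5, F = X²Y² + X^n + Y^n ∈ k[[X,Y]], and B = k[[X,Y]]/(∂F/∂X, ∂F/∂Y). Let f be the image of F in B. Then df = 0 in the module of Kähler differentials Ω_{B/k}. -/
open MvPowerSeries

set_option maxHeartbeats 2000000 in
set_option synthInstance.maxHeartbeats 1000000 in
/-- Lemma 2.4(iii): `df = 0` in `Ω_{B/k}`, where `f` is the image of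
`F = X²Y² + Xⁿ + Yⁿ` in `B = k[[X,Y]]/(∂F/∂X, ∂F/∂Y)`. -/
theorem stmt3 (k : Type) [Field k] [CharZero k] (n : ℕ) (hn : 5 ≤ n) :
    KaehlerDifferential.D k
      (MvPowerSeries (Fin 2) k ⧸
        (Ideal.span
          {2 * X (0 : Fin 2) * X 1 ^ 2 + (n : MvPowerSeries (Fin 2) k) * X 0 ^ (n - 1),
           2 * X (0 : Fin 2) ^ 2 * X 1 + (n : MvPowerSeries (Fin 2) k) * X 1 ^ (n - 1)} :
          Ideal (MvPowerSeries (Fin 2) k)))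
      (Ideal.Quotient.mk _ (X 0 ^ 2 * X 1 ^ 2 + X 0 ^ n + X 1 ^ n)) = 0 := by
  set A := MvPowerSeries (Fin 2) k
  set J : Ideal A := Ideal.span
      {2 * X (0 : Fin 2) * X 1 ^ 2 + (n : A) * X 0 ^ (n - 1),
       2 * X (0 : Fin 2) ^ 2 * X 1 + (n : A) * X 1 ^ (n - 1)} with hJ
  set B := A ⧸ J
  set a : B := Ideal.Quotient.mk J (X 0) with ha
  set b : B := Ideal.Quotient.mk J (X 1) with hb
  have hx : 2 * a * b ^ 2 + (n : B) * a ^ (n - 1) = 0 := by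
    rw [ha, hb]
    rw [(map_ofNat (Ideal.Quotient.mk J) 2).symm, (map_natCast (Ideal.Quotient.mk J) n).symm,
      ← map_pow, ← map_pow, ← map_mul, ← map_mul, ← map_mul, ← map_add,
      Ideal.Quotient.eq_zero_iff_mem]
    exact Ideal.subset_span (Set.mem_insert _ _)
  have hy : 2 * a ^ 2 * b + (n : B) * b ^ (n - 1) = 0 := by
    rw [ha, hb]
    rw [(map_ofNat (Ideal.Quotient.mk J) 2).symm, (map_natCast (Ideal.Quotient.mk J) n).symm,
      ← map_pow, ← map_pow, ← map_mul, ← map_mul, ← map_mul, ← map_add,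
      Ideal.Quotient.eq_zero_iff_mem]
    exact Ideal.subset_span (Set.mem_insert_of_mem _ rfl)
  have hF : Ideal.Quotient.mk J (X 0 ^ 2 * X 1 ^ 2 + X 0 ^ n + X 1 ^ n)
      = a ^ 2 * b ^ 2 + a ^ n + b ^ n := by
    simp [ha, hb, map_add, map_mul, map_pow]
  rw [hF]
  have key : KaehlerDifferential.D k B (a ^ 2 * b ^ 2 + a ^ n + b ^ n)
      = (2 * a * b ^ 2 + (n : B) * a ^ (n - 1)) • KaehlerDifferential.D k B a
        + (2 * a ^ 2 * b + (n : B) * b ^ (n - 1)) • KaehlerDifferential.D k B b := by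
    simp only [map_add, Derivation.leibniz, Derivation.leibniz_pow,
      ← Nat.cast_smul_eq_nsmul B, smul_smul]
    simp only [Nat.cast_ofNat, show 2 - 1 = 1 from rfl, pow_one]
    have hs : ∀ (r s : B) (m : Ω[B⁄k]), (r + s) • m = r • m + s • m := fun r s m => add_smul r s m
    rw [show a ^ 2 * (2 * b) = 2 * a ^ 2 * b by ring, show b ^ 2 * (2 * a) = 2 * a * b ^ 2 by ring,
      hs, hs]
    abel
  rw [key, hx, hy]
  have h0 : ∀ m : Ω[B⁄k], (0 : B) • m = 0 := fun m => zero_smul B m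
  rw [h0, h0, add_zero]
end

section
/- Let k be a field of characteristic zero, n ≥ 5, and F = X²Y² + X^n + Y^n ∈ k[[X,Y]]. In k[[X,Y]], the partial derivatives ∂F/∂X and ∂F/∂Y form a regular sequence. -/
open MvPowerSeries Finset Pointwise

namespace Stmt4A

variable {k : Type} [Field k]

/-- exponent vector (a,b) in `Fin 2 →₀ ℕ` -/
noncomputable def e (a b : ℕ) : Fin 2 →₀ ℕ := Finsupp.single 0 a + Finsupp.single 1 b

lemma e_apply_0 (a b : ℕ) : e a b 0 = a := by simp [e]
lemma e_apply_1 (a b : ℕ) : e a b 1 = b := by simp [e]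

lemma e_eq_self (d : Fin 2 →₀ ℕ) : e (d 0) (d 1) = d := by
  ext i
  fin_cases i <;> simp [e, Finsupp.single_apply]

lemma e_le_e {a b a' b' : ℕ} : e a' b' ≤ e a b ↔ a' ≤ a ∧ b' ≤ b := by
  rw [Finsupp.le_def]
  constructor
  · intro h
    exact ⟨by simpa [e_apply_0] using h 0, by simpa [e_apply_1] using h 1⟩
  · rintro ⟨h1, h2⟩ i
    fin_cases i <;> simpa [e_apply_0, e_apply_1]

lemma e_sub (a b a' b' : ℕ) : e a b - e a' b' = e (a - a') (b - b') := by
  ext i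
  fin_cases i <;> simp [e, Finsupp.single_apply, Finsupp.tsub_apply]

lemma e_add (a b a' b' : ℕ) : e a b + e a' b' = e (a + a') (b + b') := by
  ext i
  fin_cases i <;> simp [e, Finsupp.single_apply]

/-- coefficient of `X^a Y^b` -/
noncomputable def cc (p : MvPowerSeries (Fin 2) k) (a b : ℕ) : k := coeff (R := k) (e a b) p

lemma cc_monomial_mul (r : k) (a₀ b₀ a b : ℕ) (p : MvPowerSeries (Fin 2) k) :
    cc (monomial (R := k) (e a₀ b₀) r * p) a b =
      if a₀ ≤ a ∧ b₀ ≤ b then r * cc p (a - a₀) (b - b₀) else 0 := by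
  rw [cc, coeff_monomial_mul]
  by_cases h : a₀ ≤ a ∧ b₀ ≤ b
  · rw [if_pos h, if_pos (e_le_e.mpr h), e_sub]; rfl
  · rw [if_neg (fun hc => h (e_le_e.mp hc)), if_neg h]

lemma X0_eq : (X 0 : MvPowerSeries (Fin 2) k) = monomial (R := k) (e 1 0) 1 := by
  rw [X]; congr 1; simp [e]

lemma X1_eq : (X 1 : MvPowerSeries (Fin 2) k) = monomial (R := k) (e 0 1) 1 := by
  rw [X]; congr 1; simp [e]

lemma cc_X0_mul (a b : ℕ) (p : MvPowerSeries (Fin 2) k) :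
    cc (X 0 * p) a b = if 1 ≤ a then cc p (a - 1) b else 0 := by
  rw [X0_eq, cc_monomial_mul]
  simp

lemma cc_X1_mul (a b : ℕ) (p : MvPowerSeries (Fin 2) k) :
    cc (X 1 * p) a b = if 1 ≤ b then cc p a (b - 1) else 0 := by
  rw [X1_eq, cc_monomial_mul]
  simp


noncomputable def U (m : ℕ) (ν : k) : MvPowerSeries (Fin 2) k :=
  monomial (R := k) (e m 0) ν + monomial (R := k) (e 0 2) 2

noncomputable def V (m : ℕ) (ν : k) : MvPowerSeries (Fin 2) k :=
  monomial (R := k) (e 2 0) 2 + monomial (R := k) (e 0 m) ν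

lemma cc_U_mul (m : ℕ) (ν : k) (p : MvPowerSeries (Fin 2) k) (a b : ℕ) :
    cc (U m ν * p) a b =
      (if m ≤ a then ν * cc p (a - m) b else 0) +
      (if 2 ≤ b then 2 * cc p a (b - 2) else 0) := by
  have : cc (U m ν * p) a b
      = cc (monomial (R := k) (e m 0) ν * p) a b + cc (monomial (R := k) (e 0 2) 2 * p) a b := by
    rw [U, add_mul, cc, cc, cc, map_add]
  rw [this, cc_monomial_mul, cc_monomial_mul]
  simp

lemma cc_V_mul (m : ℕ) (ν : k) (p : MvPowerSeries (Fin 2) k) (a b : ℕ) :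
    cc (V m ν * p) a b =
      (if 2 ≤ a then 2 * cc p (a - 2) b else 0) +
      (if m ≤ b then ν * cc p a (b - m) else 0) := by
  have : cc (V m ν * p) a b
      = cc (monomial (R := k) (e 2 0) 2 * p) a b + cc (monomial (R := k) (e 0 m) ν * p) a b := by
    rw [V, add_mul, cc, cc, cc, map_add]
  rw [this, cc_monomial_mul, cc_monomial_mul]
  simp

lemma sum_helper (m₀ : ℕ) (F : ℕ → k) (b : ℕ) :
    (∑ j ∈ range (b/2+1), if m₀ ≤ b - 2*j then F j else 0)
      = if m₀ ≤ b then ∑ j ∈ range ((b - m₀)/2 + 1), F j else 0 := by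
  by_cases hb : m₀ ≤ b
  · rw [if_pos hb]
    have h1 : ∀ j ∈ range (b/2+1), (if m₀ ≤ b - 2*j then F j else 0)
        = (if j ∈ range ((b-m₀)/2+1) then F j else 0) := by
      intro j hj
      rw [mem_range] at hj
      refine if_congr ?_ rfl rfl
      rw [mem_range]
      omega
    rw [Finset.sum_congr rfl h1, Finset.sum_ite_mem,
      Finset.inter_eq_right.mpr (Finset.range_subset_range.mpr (by omega))]
  · rw [if_neg hb]
    apply Finset.sum_eq_zero
    intro j hj
    rw [if_neg (by omega)]

/-- the reduction-mod-`U` operator -/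
noncomputable def T (m : ℕ) (s : k) (p : MvPowerSeries (Fin 2) k) (a b : ℕ) : k :=
  ∑ j ∈ range (b/2 + 1), s ^ j * cc p (a + j*m) (b - 2*j)


lemma T_U_mul (m : ℕ) (ν s : k) (hs : ν * s = -2)
    (q : MvPowerSeries (Fin 2) k) (a b : ℕ) (ha : a < m) :
    T m s (U m ν * q) a b = 0 := by
  unfold T
  have expand : ∀ j, s ^ j * cc (U m ν * q) (a + j*m) (b - 2*j)
      = (if 1 ≤ j then s^j * (ν * cc q (a + j*m - m) (b - 2*j)) else 0)
        + (if 2 ≤ b - 2*j then s^j * (2 * cc q (a + j*m) (b - 2*j - 2)) else 0) := by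
    intro j
    rw [cc_U_mul, mul_add, mul_ite, mul_ite, mul_zero]
    congr 1
    refine if_congr ?_ rfl rfl
    constructor
    · intro h
      rcases Nat.eq_zero_or_pos j with h0 | h1
      · subst h0; simp only [Nat.zero_mul, Nat.add_zero] at h; omega
      · exact h1
    · intro h
      have : m ≤ j * m := Nat.le_mul_of_pos_left m h
      omega
  rw [Finset.sum_congr rfl (fun j _ => expand j), Finset.sum_add_distrib]
  have e1 : (∑ j ∈ range (b/2+1), if 1 ≤ j then s^j * (ν * cc q (a + j*m - m) (b - 2*j)) else 0)
      = ∑ j ∈ range (b/2), s^(j+1) * (ν * cc q (a + j*m) (b - 2*j - 2)) := by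
    rw [Finset.sum_range_succ']
    rw [if_neg (by omega : ¬ (1:ℕ) ≤ 0), add_zero]
    refine Finset.sum_congr rfl (fun j _ => ?_)
    rw [if_pos (by omega),
      show a + (j+1)*m - m = a + j*m by rw [Nat.succ_mul, ← Nat.add_assoc, Nat.add_sub_cancel],
      show b - 2*(j+1) = b - 2*j - 2 by omega]
  rw [e1, sum_helper 2 (fun j => s^j * (2 * cc q (a + j*m) (b - 2*j - 2))) b]
  by_cases hb : 2 ≤ b
  · rw [if_pos hb, show (b-2)/2 + 1 = b/2 by omega, ← Finset.sum_add_distrib]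
    refine Finset.sum_eq_zero (fun j _ => ?_)
    linear_combination (s ^ j * cc q (a + j*m) (b - 2*j - 2)) * hs
  · rw [if_neg hb, show b/2 = 0 by omega]
    simp

lemma T_X1_mul (m : ℕ) (s : k) (p : MvPowerSeries (Fin 2) k) (a b : ℕ) :
    T m s (X 1 * p) a b = if 1 ≤ b then T m s p a (b-1) else 0 := by
  unfold T
  simp only [cc_X1_mul, mul_ite, mul_zero]
  rw [sum_helper 1 (fun j => s^j * cc p (a+j*m) (b - 2*j - 1)) b]
  refine if_congr Iff.rfl ?_ rfl
  refine Finset.sum_congr rfl (fun j _ => ?_)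
  rw [show b - 2*j - 1 = b - 1 - 2*j by omega]

lemma T_V_mul_ge2 (m : ℕ) (ν s : k) (p : MvPowerSeries (Fin 2) k) (a b : ℕ) (ha2 : 2 ≤ a) :
    T m s (V m ν * p) a b
      = 2 * T m s p (a-2) b + (if m ≤ b then ν * T m s p a (b-m) else 0) := by
  obtain ⟨a', rfl⟩ : ∃ a', a = a' + 2 := ⟨a - 2, by omega⟩
  unfold T
  have expand : ∀ j, s ^ j * cc (V m ν * p) (a' + 2 + j*m) (b - 2*j)
      = s^j * (2 * cc p (a' + j*m) (b - 2*j))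
        + (if m ≤ b - 2*j then s^j * (ν * cc p (a' + 2 + j*m) (b - 2*j - m)) else 0) := by
    intro j
    rw [cc_V_mul, mul_add, mul_ite, mul_ite, mul_zero]
    congr 1
    rw [if_pos (by omega)]
    rw [show a' + 2 + j*m - 2 = a' + j*m by
      rw [show a' + 2 + j*m = a' + j*m + 2 by ring, Nat.add_sub_cancel]]
  rw [Finset.sum_congr rfl (fun j _ => expand j), Finset.sum_add_distrib]
  rw [sum_helper m (fun j => s^j * (ν * cc p (a' + 2 + j*m) (b - 2*j - m))) b]
  congr 1
  · rw [Finset.mul_sum, show a' + 2 - 2 = a' by omega]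
    exact Finset.sum_congr rfl (fun j _ => by ring)
  · by_cases hb : m ≤ b
    · rw [if_pos hb, if_pos hb, Finset.mul_sum]
      refine Finset.sum_congr rfl (fun j _ => ?_)
      rw [show b - m - 2*j = b - 2*j - m by omega]
      ring
    · rw [if_neg hb, if_neg hb]

lemma T_V_mul_lt2 (m : ℕ) (ν s : k) (hm : 2 ≤ m) (p : MvPowerSeries (Fin 2) k)
    (a b : ℕ) (ha2 : a < 2) :
    T m s (V m ν * p) a b
      = (if 2 ≤ b then (2*s) * T m s p (a+m-2) (b-2) else 0)
        + (if m ≤ b then ν * T m s p a (b-m) else 0) := by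
  unfold T
  have expand : ∀ j, s ^ j * cc (V m ν * p) (a + j*m) (b - 2*j)
      = (if 1 ≤ j then s^j * (2 * cc p (a + j*m - 2) (b - 2*j)) else 0)
        + (if m ≤ b - 2*j then s^j * (ν * cc p (a + j*m) (b - 2*j - m)) else 0) := by
    intro j
    rw [cc_V_mul, mul_add, mul_ite, mul_ite, mul_zero]
    congr 1
    refine if_congr ?_ rfl rfl
    constructor
    · intro h
      rcases Nat.eq_zero_or_pos j with h0 | h1
      · subst h0; simp only [Nat.zero_mul, Nat.add_zero] at h; omega
      · exact h1
    · intro h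
      have : m ≤ j * m := Nat.le_mul_of_pos_left m h
      omega
  rw [Finset.sum_congr rfl (fun j _ => expand j), Finset.sum_add_distrib]
  rw [sum_helper m (fun j => s^j * (ν * cc p (a + j*m) (b - 2*j - m))) b]
  congr 1
  · have e1 : (∑ j ∈ range (b/2+1), if 1 ≤ j then s^j * (2 * cc p (a + j*m - 2) (b - 2*j)) else 0)
        = ∑ j ∈ range (b/2), s^(j+1) * (2 * cc p ((a + m - 2) + j*m) (b - 2*j - 2)) := by
      rw [Finset.sum_range_succ']
      rw [if_neg (by omega : ¬ (1:ℕ) ≤ 0), add_zero]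
      refine Finset.sum_congr rfl (fun j _ => ?_)
      rw [if_pos (by omega),
        show a + (j+1)*m - 2 = (a + m - 2) + j*m by
          rw [Nat.succ_mul, show a + (j*m + m) = (a + m) + j*m by ring,
            Nat.sub_add_comm (by omega : 2 ≤ a + m)],
        show b - 2*(j+1) = b - 2*j - 2 by omega]
    rw [e1]
    by_cases hb : 2 ≤ b
    · rw [if_pos hb, show b/2 = (b-2)/2 + 1 by omega, Finset.mul_sum]
      refine Finset.sum_congr rfl (fun j _ => ?_)
      rw [show b - 2 - 2*j = b - 2*j - 2 by omega]
      ring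
    · rw [if_neg hb, show b/2 = 0 by omega]
      simp
  · by_cases hb : m ≤ b
    · rw [if_pos hb, if_pos hb, Finset.mul_sum]
      refine Finset.sum_congr rfl (fun j _ => ?_)
      rw [show b - m - 2*j = b - 2*j - m by omega]
      ring
    · rw [if_neg hb, if_neg hb]


lemma descent (m : ℕ) (ν s : k) (hm : 3 ≤ m) (hs : ν * s = -2) (h2 : (2:k) ≠ 0)
    (t : ℕ → ℕ → k)
    (H1 : ∀ a b, 2 ≤ a → a < m →
      2 * t (a-2) b + (if m ≤ b then ν * t a (b-m) else 0) = 0)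
    (H2 : ∀ a b, a < 2 →
      (if 2 ≤ b then (2*s) * t (a+m-2) (b-2) else 0)
        + (if m ≤ b then ν * t a (b-m) else 0) = 0) :
    ∀ a b, a < m → t a b = 0 := by
  have hν : ν ≠ 0 := by
    intro h; rw [h, zero_mul] at hs
    exact h2 (by linear_combination hs)
  have hsne : s ≠ 0 := by
    intro h; rw [h, mul_zero] at hs
    exact h2 (by linear_combination hs)
  have hmm : 9 ≤ m * m := Nat.mul_le_mul hm hm
  have main : ∀ W a b, 2*a + m*b = W → a < m → t a b = 0 := by
    intro W
    induction W using Nat.strong_induction_on with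
    | _ W IH =>
      intro a b hW ham
      by_cases hc : a + 2 < m
      · have h := H1 (a+2) b (by omega) hc
        rw [show a+2-2 = a by omega] at h
        by_cases hbm : m ≤ b
        · obtain ⟨b', rfl⟩ : ∃ b', b = b' + m := ⟨b - m, by omega⟩
          rw [if_pos hbm, Nat.add_sub_cancel] at h
          have ht : t (a+2) b' = 0 := by
            refine IH (2*(a+2) + m*b') ?_ _ _ rfl (by omega)
            subst hW
            have : m*(b'+m) = m*b' + m*m := by ring
            omega
          rw [ht, mul_zero, add_zero] at h
          have := mul_eq_zero.mp h
          tauto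
        · rw [if_neg hbm, add_zero] at h
          have := mul_eq_zero.mp h
          tauto
      · have h := H2 (a - (m-2)) (b+2) (by omega)
        rw [if_pos (by omega : 2 ≤ b+2), show b+2-2 = b by omega,
          show a-(m-2)+m-2 = a by omega] at h
        by_cases hbm : m ≤ b + 2
        · rw [if_pos hbm] at h
          have ht : t (a-(m-2)) (b+2-m) = 0 := by
            refine IH (2*(a-(m-2)) + m*(b+2-m)) ?_ _ _ rfl (by omega)
            subst hW
            obtain ⟨a', ha'⟩ : ∃ a', a = a' + (m-2) := ⟨a-(m-2), by omega⟩
            obtain ⟨b'', hb''⟩ : ∃ b'', b = b'' + (m-2) := ⟨b-(m-2), by omega⟩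
            subst ha'; subst hb''
            rw [show a' + (m-2) - (m-2) = a' by omega,
              show b'' + (m-2) + 2 - m = b'' by omega]
            have e2 : m*(b''+(m-2)) = m*b'' + m*(m-2) := by ring
            have e3 : 1 ≤ m*(m-2) := Nat.mul_pos (by omega) (by omega)
            omega
          rw [ht, mul_zero, add_zero] at h
          rcases mul_eq_zero.mp h with h' | h'
          · rcases mul_eq_zero.mp h' with h'' | h'' <;> tauto
          · exact h'
        · rw [if_neg hbm, add_zero] at h
          rcases mul_eq_zero.mp h with h' | h'
          · rcases mul_eq_zero.mp h' with h'' | h'' <;> tauto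
          · exact h'
  exact fun a b ham => main (2*a+m*b) a b rfl ham


noncomputable def wA (ν : k) (m : ℕ) (p : MvPowerSeries (Fin 2) k) : ℕ → ℕ → k
  | 0 => fun a => cc p (a+m) 0 / ν
  | 1 => fun a => cc p (a+m) 1 / ν
  | (b+2) => fun a => (cc p (a+m) (b+2) - 2 * wA ν m p b (a+m)) / ν

noncomputable def Wser (ν : k) (m : ℕ) (p : MvPowerSeries (Fin 2) k) :
    MvPowerSeries (Fin 2) k := fun d => wA ν m p (d 1) (d 0)

lemma cc_Wser (ν : k) (m : ℕ) (p : MvPowerSeries (Fin 2) k) (a b : ℕ) :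
    cc (Wser ν m p) a b = wA ν m p b a := by
  rw [cc, coeff_apply]
  show wA ν m p (e a b 1) (e a b 0) = _
  rw [e_apply_0, e_apply_1]

lemma wA_spec (m : ℕ) (ν : k) (hν : ν ≠ 0) (p : MvPowerSeries (Fin 2) k) :
    ∀ B A', ν * wA ν m p B A'
      = cc p (A'+m) B - (if 2 ≤ B then 2 * wA ν m p (B-2) (A'+m) else 0) := by
  intro B A'
  match B with
  | 0 => rw [if_neg (by omega)]; simp [wA, mul_comm ν, div_mul_cancel₀ _ hν]
  | 1 => rw [if_neg (by omega)]; simp [wA, mul_comm ν, div_mul_cancel₀ _ hν]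
  | (b+2) =>
    rw [if_pos (by omega), show b+2-2 = b by omega]
    show ν * ((cc p (A'+m) (b+2) - 2 * wA ν m p b (A'+m)) / ν) = _
    rw [mul_comm ν, div_mul_cancel₀ _ hν]

lemma wA_eq (m : ℕ) (ν s : k) (hν : ν ≠ 0) (hs : ν * s = -2) (p : MvPowerSeries (Fin 2) k) :
    ∀ b a, wA ν m p b a
      = ∑ j ∈ range (b/2+1), s^j * (cc p (a + m + j*m) (b - 2*j) / ν) := by
  intro b
  induction b using Nat.strong_induction_on with
  | _ b IH =>
    match b with
    | 0 => intro a; simp [wA]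
    | 1 => intro a; simp [wA]
    | (b+2) =>
      intro a
      show (cc p (a+m) (b+2) - 2 * wA ν m p b (a+m)) / ν = _
      rw [show (b+2)/2 + 1 = (b/2+1)+1 by omega, Finset.sum_range_succ']
      have e0 : s^0 * (cc p (a + m + 0*m) (b+2-2*0) / ν) = cc p (a+m) (b+2) / ν := by
        norm_num
      rw [e0, IH b (by omega) (a+m), sub_div, Finset.mul_sum, Finset.sum_div]
      have key : ∀ j ∈ range (b/2+1),
          2 * (s^j * (cc p (a + m + m + j*m) (b - 2*j) / ν)) / ν
            = -(s^(j+1) * (cc p (a + m + (j+1)*m) (b+2-2*(j+1)) / ν)) := by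
        intro j _
        rw [show a + m + (j+1)*m = a + m + m + j*m by ring,
          show b+2-2*(j+1) = b - 2*j by omega]
        have hdiv : (2:k)/ν = -s := by rw [div_eq_iff hν]; linear_combination hs
        generalize cc p (a + m + m + j*m) (b - 2*j) = c
        calc 2 * (s^j * (c/ν)) / ν = (2/ν) * (s^j * (c/ν)) := by ring
          _ = (-s) * (s^j * (c/ν)) := by rw [hdiv]
          _ = -(s^(j+1) * (c/ν)) := by ring
      rw [Finset.sum_congr rfl key]
      rw [Finset.sum_neg_distrib, sub_neg_eq_add, add_comm]

lemma U_dvd (m : ℕ) (ν s : k) (hν : ν ≠ 0) (hs : ν * s = -2) (p : MvPowerSeries (Fin 2) k)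
    (hT : ∀ a b, a < m → T m s p a b = 0) : ∃ w, p = U m ν * w := by
  refine ⟨Wser ν m p, ?_⟩
  suffices h : ∀ A B, cc p A B = cc (U m ν * Wser ν m p) A B by
    ext d
    have h2 := h (d 0) (d 1)
    rw [cc, cc, e_eq_self d] at h2
    exact h2
  intro A B
  rw [cc_U_mul, cc_Wser, cc_Wser]
  by_cases hA : m ≤ A
  · obtain ⟨A', rfl⟩ : ∃ A', A = A' + m := ⟨A - m, by omega⟩
    rw [if_pos hA, Nat.add_sub_cancel, wA_spec m ν hν p B A', sub_add_cancel]
  · rw [if_neg hA, zero_add]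
    have ht := hT A B (by omega)
    unfold T at ht
    by_cases hB : 2 ≤ B
    · rw [if_pos hB]
      rw [Finset.sum_range_succ'] at ht
      have e0 : s^0 * cc p (A + 0*m) (B-2*0) = cc p A B := by norm_num
      rw [e0] at ht
      have e2 : ∀ j ∈ range (B/2), s^(j+1) * cc p (A+(j+1)*m) (B-2*(j+1))
          = -(2 * (s^j * (cc p (A+m+j*m) (B-2-2*j) / ν))) := by
        intro j _
        rw [show A+(j+1)*m = A+m+j*m by ring, show B-2*(j+1) = B-2-2*j by omega]
        have hdiv : (2:k)/ν = -s := by rw [div_eq_iff hν]; linear_combination hs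
        generalize cc p (A+m+j*m) (B-2-2*j) = c
        calc s^(j+1) * c = -((-s) * (s^j * (c/ν)) * ν) := by
              field_simp
              ring
          _ = -(2 * (s^j * (c/ν))) := by
              rw [← hdiv]
              field_simp
      rw [Finset.sum_congr rfl e2, Finset.sum_neg_distrib] at ht
      rw [wA_eq m ν s hν hs, Finset.mul_sum, show (B-2)/2+1 = B/2 by omega]
      linear_combination ht
    · rw [if_neg hB]
      rw [show B/2 = 0 by omega, Finset.sum_range_one] at ht
      simpa using ht


lemma main_div (m : ℕ) (ν s : k) (hm : 3 ≤ m) (hν : ν ≠ 0) (h2 : (2:k) ≠ 0)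
    (hs : ν * s = -2) (h q : MvPowerSeries (Fin 2) k)
    (heq : (X 1 * V m ν) * h = (X 0 * U m ν) * q) :
    ∃ w, h = (X 0 * U m ν) * w := by
  -- Step A : X divides h
  have hX : ∀ b, cc h 0 b = 0 := by
    intro b
    have hc := congrArg (fun p => cc p 0 (b+m+1)) heq
    simp only [mul_assoc] at hc
    rw [cc_X1_mul, cc_X0_mul, if_pos (by omega : 1 ≤ b+m+1), if_neg (by omega : ¬ 1 ≤ 0),
      cc_V_mul, if_neg (by omega : ¬ 2 ≤ 0), if_pos (by omega : m ≤ b+m+1-1),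
      show b+m+1-1-m = b by omega, zero_add] at hc
    exact (mul_eq_zero.mp hc).resolve_left hν
  have hXdvd : (X 0 : MvPowerSeries (Fin 2) k) ∣ h := by
    rw [X_dvd_iff]
    intro d hd
    have hb := hX (d 1)
    rw [cc] at hb
    conv_lhs => rw [← e_eq_self d, hd]
    exact hb
  obtain ⟨h₁, rfl⟩ := hXdvd
  have hX0 : (X 0 : MvPowerSeries (Fin 2) k) ≠ 0 := by
    intro hzero
    have := congrArg (fun p => cc p 1 0) hzero
    rw [X0_eq] at this
    simp only [cc, map_zero] at this
    rw [coeff_monomial, if_pos rfl] at this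
    exact one_ne_zero this
  have hcan : X 1 * V m ν * h₁ = U m ν * q :=
    mul_left_cancel₀ hX0 (by linear_combination heq)
  have hTV : ∀ a b, a < m → T m s (V m ν * h₁) a b = 0 := by
    intro a b ha
    have h0 : T m s (X 1 * (V m ν * h₁)) a (b+1) = 0 := by
      rw [show X 1 * (V m ν * h₁) = U m ν * q by linear_combination hcan]
      exact T_U_mul m ν s hs q a (b+1) ha
    rw [T_X1_mul, if_pos (by omega), show b+1-1 = b by omega] at h0
    exact h0
  have hT1 : ∀ a b, a < m → T m s h₁ a b = 0 := by
    apply descent m ν s hm hs h2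
    · intro a b ha2 ham
      have hv := hTV a b ham
      rw [T_V_mul_ge2 m ν s h₁ a b ha2] at hv
      exact hv
    · intro a b ha2
      have hv := hTV a b (by omega)
      rw [T_V_mul_lt2 m ν s (by omega) h₁ a b ha2] at hv
      exact hv
  obtain ⟨w, hw⟩ := U_dvd m ν s hν hs h₁ hT1
  exact ⟨w, by rw [hw]; ring⟩

lemma C_mul_X01 (r : k) (c d : ℕ) :
    C (σ := Fin 2) (R := k) r * (X 0)^c * (X 1)^d = monomial (R := k) (e c d) r := by
  rw [← monomial_zero_eq_C_apply, X_pow_eq, X_pow_eq, monomial_mul_monomial,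
    monomial_mul_monomial, mul_one, mul_one]
  refine congrArg (fun dd => monomial (R := k) dd r) ?_
  ext i
  fin_cases i <;> simp [e, Finsupp.single_apply]

lemma X0_mul_U (m : ℕ) (ν : k) :
    X 0 * U m ν = monomial (R := k) (e (m+1) 0) ν + monomial (R := k) (e 1 2) 2 := by
  rw [X0_eq, U, mul_add, monomial_mul_monomial, monomial_mul_monomial,
    e_add, e_add, one_mul, one_mul]
  simp [Nat.add_comm]

lemma X1_mul_V (m : ℕ) (ν : k) :
    X 1 * V m ν = monomial (R := k) (e 2 1) 2 + monomial (R := k) (e 0 (m+1)) ν := by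
  rw [X1_eq, V, mul_add, monomial_mul_monomial, monomial_mul_monomial,
    e_add, e_add, one_mul, one_mul]
  simp [Nat.add_comm]

lemma cc_U (m : ℕ) (ν : k) (hm : 1 ≤ m) : cc (U m ν) 0 2 = 2 := by
  rw [cc, U, map_add, coeff_monomial, coeff_monomial, if_pos rfl,
    if_neg (fun hcon => by
      have := congrArg (fun d : Fin 2 →₀ ℕ => d 0) hcon
      simp only [e_apply_0] at this
      omega), zero_add]

lemma U_ne_zero (m : ℕ) (ν : k) (hm : 1 ≤ m) (h2 : (2:k) ≠ 0) : U m ν ≠ 0 := by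
  intro hcon
  have := cc_U (k := k) m ν hm
  rw [hcon] at this
  simp only [cc, map_zero] at this
  exact h2 this.symm

lemma X0_ne_zero : (X 0 : MvPowerSeries (Fin 2) k) ≠ 0 := by
  intro hzero
  have := congrArg (fun p => cc p 1 0) hzero
  rw [X0_eq] at this
  simp only [cc, map_zero] at this
  rw [coeff_monomial, if_pos rfl] at this
  exact one_ne_zero this

end Stmt4A

open Stmt4A in
/-- In `k[[X,Y]]` (`char k = 0`, `n ≥ 5`), the partial derivatives
`∂F/∂X = 2XY² + nX^{n-1}` and `∂F/∂Y = 2X²Y + nY^{n-1}` of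
`F = X²Y² + Xⁿ + Yⁿ` form a regular sequence. -/
theorem stmt4 (k : Type) [Field k] [CharZero k] (n : ℕ) (hn : 5 ≤ n) :
    RingTheory.Sequence.IsRegular (MvPowerSeries (Fin 2) k)
      [2 * X (0 : Fin 2) * X 1 ^ 2 + (n : MvPowerSeries (Fin 2) k) * X 0 ^ (n - 1),
       2 * X (0 : Fin 2) ^ 2 * X 1 + (n : MvPowerSeries (Fin 2) k) * X 1 ^ (n - 1)] := by
  classical
  have hm3 : 3 ≤ n - 2 := by omega
  set m : ℕ := n - 2 with hm_def
  set ν : k := (n : k) with hν_def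
  have hν : ν ≠ 0 := Nat.cast_ne_zero.mpr (by omega)
  have h2k : (2:k) ≠ 0 := two_ne_zero
  set s : k := -(2/ν) with hs_def
  have hs : ν * s = -2 := by rw [hs_def]; field_simp
  have c2 : (C (σ := Fin 2) (R := k)) (2:k) = (2 : MvPowerSeries (Fin 2) k) := map_ofNat _ 2
  have cn : (C (σ := Fin 2) (R := k)) ((n:ℕ):k) = ((n:ℕ) : MvPowerSeries (Fin 2) k) := map_natCast _ n
  have key_f : 2 * X (0 : Fin 2) * X 1 ^ 2 + (n : MvPowerSeries (Fin 2) k) * X 0 ^ (n - 1)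
      = X 0 * U m ν := by
    rw [show (2 : MvPowerSeries (Fin 2) k) * X 0 * X 1^2 = monomial (R := k) (e 1 2) (2:k) by
        rw [← C_mul_X01 (2:k) 1 2, c2]; ring,
      show ((n:ℕ) : MvPowerSeries (Fin 2) k) * X 0^(n-1) = monomial (R := k) (e (m+1) 0) ν by
        rw [← C_mul_X01 ν (m+1) 0, cn, show m+1 = n-1 by omega]; ring,
      X0_mul_U, add_comm]
  have key_g : 2 * X (0 : Fin 2) ^ 2 * X 1 + (n : MvPowerSeries (Fin 2) k) * X 1 ^ (n - 1)
      = X 1 * V m ν := by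
    rw [show (2 : MvPowerSeries (Fin 2) k) * X 0^2 * X 1 = monomial (R := k) (e 2 1) (2:k) by
        rw [← C_mul_X01 (2:k) 2 1, c2]; ring,
      show ((n:ℕ) : MvPowerSeries (Fin 2) k) * X 1^(n-1) = monomial (R := k) (e 0 (m+1)) ν by
        rw [← C_mul_X01 ν 0 (m+1), cn, show m+1 = n-1 by omega]; ring,
      X1_mul_V]
  rw [key_f, key_g, RingTheory.Sequence.isRegular_iff]
  have hfne : (X 0 * U m ν : MvPowerSeries (Fin 2) k) ≠ 0 :=
    mul_ne_zero X0_ne_zero (U_ne_zero m ν (by omega) h2k)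
  constructor
  · rw [RingTheory.Sequence.isWeaklyRegular_cons_iff]
    constructor
    · intro x y hxy
      exact mul_left_cancel₀ hfne (by simpa [smul_eq_mul] using hxy)
    · rw [RingTheory.Sequence.isWeaklyRegular_cons_iff]
      refine ⟨?_, RingTheory.Sequence.IsWeaklyRegular.nil _ _⟩
      -- the key step: X1*V is regular modulo X0*U
      have hmemN : ∀ x : MvPowerSeries (Fin 2) k,
          x ∈ (X 0 * U m ν) • (⊤ : Submodule (MvPowerSeries (Fin 2) k) (MvPowerSeries (Fin 2) k))
            ↔ ∃ y, x = (X 0 * U m ν) * y := by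
        intro x
        rw [← SetLike.mem_coe, Submodule.coe_pointwise_smul, Set.mem_smul_set]
        constructor
        · rintro ⟨y, -, rfl⟩; exact ⟨y, by rw [smul_eq_mul]⟩
        · rintro ⟨y, rfl⟩; exact ⟨y, trivial, by rw [smul_eq_mul]⟩
      intro x y hxy
      obtain ⟨a, rfl⟩ := Submodule.Quotient.mk_surjective _ x
      obtain ⟨b, rfl⟩ := Submodule.Quotient.mk_surjective _ y
      dsimp only at hxy
      rw [← Submodule.Quotient.mk_smul, ← Submodule.Quotient.mk_smul,
        Submodule.Quotient.eq] at hxy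
      rw [Submodule.Quotient.eq]
      have hmem : (X 1 * V m ν) * (a - b)
          ∈ (X 0 * U m ν) • (⊤ : Submodule (MvPowerSeries (Fin 2) k) (MvPowerSeries (Fin 2) k)) := by
        have : (X 1 * V m ν) * (a - b) = (X 1 * V m ν) • a - (X 1 * V m ν) • b := by
          simp [smul_eq_mul]; ring
        rw [this]
        exact hxy
      obtain ⟨q, hq⟩ := (hmemN _).mp hmem
      obtain ⟨w, hw⟩ := main_div m ν s hm3 hν h2k hs (a - b) q hq
      exact (hmemN _).mpr ⟨w, hw⟩
  · -- the ideal is proper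
    intro hT
    have h1 : (1 : MvPowerSeries (Fin 2) k)
        ∈ Ideal.ofList [X 0 * U m ν, X 1 * V m ν]
            • (⊤ : Submodule (MvPowerSeries (Fin 2) k) (MvPowerSeries (Fin 2) k)) :=
      hT ▸ Submodule.mem_top
    rw [smul_eq_mul, Ideal.mul_top] at h1
    have hker : Ideal.ofList [X 0 * U m ν, X 1 * V m ν]
        ≤ RingHom.ker (constantCoeff (σ := Fin 2) (R := k)) := by
      rw [Ideal.span_le]
      intro x hx
      simp only [Set.mem_setOf_eq, List.mem_cons, List.mem_singleton, List.not_mem_nil,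
        or_false] at hx
      rcases hx with rfl | rfl <;>
        simp [RingHom.mem_ker, map_mul, constantCoeff_X]
    have := hker h1
    rw [RingHom.mem_ker, map_one] at this
    exact one_ne_zero this
end

section
/- Let k be a field of characteristic zero, n ≥ 5, F = X²Y² + X^n + Y^n ∈ k[[X,Y]]. Then XY³ lies in the ideal (∂F/∂X, ∂F/∂Y) of k[[X,Y]]. -/
open MvPowerSeries

/-- `XY³` lies in the Jacobian ideal `(∂F/∂X, ∂F/∂Y)` of
`F = X²Y² + Xⁿ + Yⁿ` in `k[[X,Y]]`, `char k = 0`, `n ≥ 5`. -/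
theorem stmt5 (k : Type) [Field k] [CharZero k] (n : ℕ) (hn : 5 ≤ n) :
    X (0 : Fin 2) * X 1 ^ 3 ∈
      (Ideal.span
        {2 * X (0 : Fin 2) * X 1 ^ 2 + (n : MvPowerSeries (Fin 2) k) * X 0 ^ (n - 1),
         2 * X (0 : Fin 2) ^ 2 * X 1 + (n : MvPowerSeries (Fin 2) k) * X 1 ^ (n - 1)} :
        Ideal (MvPowerSeries (Fin 2) k)) := by
  obtain ⟨m, rfl⟩ : ∃ m, n = m + 5 := ⟨n - 5, by omega⟩
  set x : MvPowerSeries (Fin 2) k := X 0 with hx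
  set y : MvPowerSeries (Fin 2) k := X 1 with hy
  set N : MvPowerSeries (Fin 2) k := ((m + 5 : ℕ) : MvPowerSeries (Fin 2) k) with hN
  have hsub : m + 5 - 1 = m + 4 := rfl
  rw [hsub]
  set Fx : MvPowerSeries (Fin 2) k := 2 * x * y ^ 2 + N * x ^ (m + 4) with hFx
  set Fy : MvPowerSeries (Fin 2) k := 2 * x ^ 2 * y + N * y ^ (m + 4) with hFy
  -- the key algebraic identity
  have key : (4 - N ^ 2 * (x * y) ^ (m + 1)) * (x * y ^ 3)
      = (2 * y) * Fx + (-(N * x ^ (m + 2))) * Fy := by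
    rw [hFx, hFy]; ring
  -- `4 - N ^ 2 * (x*y)^(m+1)` is a unit
  have hu : IsUnit (4 - N ^ 2 * (x * y) ^ (m + 1)) := by
    rw [MvPowerSeries.isUnit_iff_constantCoeff]
    have : (constantCoeff : MvPowerSeries (Fin 2) k →+* k) (4 - N ^ 2 * (x * y) ^ (m + 1)) = 4 := by
      simp [hN, hx, hy, zero_pow (Nat.succ_ne_zero m), map_ofNat]
    rw [this]
    exact isUnit_iff_ne_zero.mpr (by norm_num)
  obtain ⟨u, hu⟩ := hu
  have hmem : (4 - N ^ 2 * (x * y) ^ (m + 1)) * (x * y ^ 3) ∈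
      (Ideal.span {Fx, Fy} : Ideal (MvPowerSeries (Fin 2) k)) := by
    rw [key]
    exact Ideal.add_mem _
      (Ideal.mul_mem_left _ _ (Ideal.subset_span (Set.mem_insert _ _)))
      (Ideal.mul_mem_left _ _ (Ideal.subset_span (Set.mem_insert_of_mem _ rfl)))
  have : x * y ^ 3 = ↑u⁻¹ * ((4 - N ^ 2 * (x * y) ^ (m + 1)) * (x * y ^ 3)) := by
    rw [← hu, ← mul_assoc, Units.inv_mul, one_mul]
  rw [this]
  exact Ideal.mul_mem_left _ _ hmem
end

section
/- Let (R, m, k) be a local algebra over a field L such that some power of m is zero, the composite field extension L → R → R/m = k is separable, and Ω_{R/L} = 0. Then m = 0, i.e., R is a field. -/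
/-- A (possibly transcendental) field extension `L ⊆ K` is separable if every
finitely generated subextension admits a separating transcendence basis: a
subset `t` of the subextension which is algebraically independent over `L`
and over which the subextension is separably algebraic. -/
def IsSeparableFieldExtension (L K : Type) [Field L] [Field K] [Algebra L K] : Prop :=
  ∀ s : Finset K, ∃ t : Set K,
    t ⊆ (IntermediateField.adjoin L (s : Set K) : Set K) ∧
    AlgebraicIndependent L ((↑) : t → K) ∧
    ∀ x ∈ IntermediateField.adjoin L (s : Set K),
      IsIntegral (IntermediateField.adjoin L t) x ∧
      (minpoly (IntermediateField.adjoin L t) x).Separable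

section LiftLemmas

open Polynomial

variable {L k B : Type} [Field L] [Field k] [Algebra L k]
  [CommRing B] [Algebra L B] (res : B →ₐ[L] k)

/-- Lift the purely transcendental part: the intermediate field generated by an
algebraically independent set lifts through `res`. -/
theorem lift_base (hu : ∀ b : B, res b ≠ 0 → IsUnit b)
    (hs : Function.Surjective ⇑res)
    (t : Set k) (ht : AlgebraicIndependent L ((↑) : t → k)) :
    ∃ σ : (IntermediateField.adjoin L t) →ₐ[L] B, ∀ y, res (σ y) = y := by
  have hrange : Set.range ((↑) : t → k) = t := Subtype.range_coe
  rw [← hrange]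
  -- choose lifts of the elements of t
  choose w hw using fun u : t => hs u
  let φ : MvPolynomial t L →ₐ[L] B := MvPolynomial.aeval w
  have hres : ∀ P : MvPolynomial t L, res (φ P) = MvPolynomial.aeval ((↑) : t → k) P := by
    intro P
    rw [← AlgHom.comp_apply]
    refine DFunLike.congr_fun (MvPolynomial.algHom_ext fun u => ?_) P
    simp [φ, hw]
  have hinj : Function.Injective (MvPolynomial.aeval ((↑) : t → k) :
      MvPolynomial t L →ₐ[L] k) := algebraicIndependent_iff_injective_aeval.1 ht
  have hunit : ∀ P : nonZeroDivisors (MvPolynomial t L), IsUnit (φ P) := by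
    rintro ⟨P, hP⟩
    refine hu _ ?_
    rw [hres]
    intro h0
    have : P = 0 := by
      apply hinj
      simpa using h0
    exact nonZeroDivisors.ne_zero hP this
  let ψ : FractionRing (MvPolynomial t L) →ₐ[L] B := IsLocalization.liftAlgHom hunit
  have hcomp : ∀ a : FractionRing (MvPolynomial t L),
      res (ψ a) = ((ht.aevalEquivField a : IntermediateField.adjoin L
        (Set.range ((↑) : t → k))) : k) := by
    have hRH : (res.comp ψ).toRingHom.comp
        (algebraMap (MvPolynomial t L) (FractionRing (MvPolynomial t L))) =
        ((IntermediateField.adjoin L (Set.range ((↑) : t → k))).val.comp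
          ht.aevalEquivField.toAlgHom).toRingHom.comp
        (algebraMap (MvPolynomial t L) (FractionRing (MvPolynomial t L))) := by
      refine RingHom.ext fun P => ?_
      simp only [RingHom.comp_apply, AlgHom.toRingHom_eq_coe, RingHom.coe_coe,
          AlgHom.comp_apply]
      have h1 : ψ ((algebraMap (MvPolynomial t L) (FractionRing (MvPolynomial t L))) P)
          = φ P := by
        rw [IsLocalization.liftAlgHom_apply, IsLocalization.lift_eq]; rfl
      rw [h1, hres]
      exact (ht.aevalEquivField_algebraMap_apply_coe P).symm
    have := IsLocalization.ringHom_ext (nonZeroDivisors (MvPolynomial t L)) hRH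
    intro a
    exact DFunLike.congr_fun this a
  refine ⟨ψ.comp ht.reprField, fun y => ?_⟩
  have : ht.aevalEquivField (ht.reprField y) = y := ht.aevalEquivField.apply_symm_apply y
  rw [AlgHom.comp_apply, hcomp, this]

/-- Hensel / Newton step: extend a lift along a separable algebraic simple extension. -/
theorem lift_step (hu : ∀ b : B, res b ≠ 0 → IsUnit b)
    (hsq : ∀ b b' : B, res b = 0 → res b' = 0 → b * b' = 0)
    (hs : Function.Surjective ⇑res)
    (F : IntermediateField L k) (σ : F →ₐ[L] B) (hσ : ∀ y : F, res (σ y) = y)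
    (β : k) (hint : IsIntegral F β) (hsepβ : (minpoly F β).Separable) :
    ∃ σ' : ((IntermediateField.adjoin F {β}).restrictScalars L) →ₐ[L] B,
      ∀ y, res (σ' y) = y := by
  letI : Algebra F B := σ.toRingHom.toAlgebra
  haveI : IsScalarTower L F B :=
    IsScalarTower.of_algebraMap_eq fun l => (σ.commutes l).symm
  -- `res` as an `F`-algebra hom
  let resF : B →ₐ[F] k :=
    { toRingHom := res.toRingHom, commutes' := fun a => hσ a }
  have hresF : ∀ b, resF b = res b := fun _ => rfl
  obtain ⟨b₀, hb₀⟩ := hs β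
  set f := minpoly F β with hf
  set e₀ : B := Polynomial.aeval b₀ f with he₀
  set d₀ : B := Polynomial.aeval b₀ (Polynomial.derivative f) with hd₀
  have hrese₀ : res e₀ = 0 := by
    have := Polynomial.aeval_algHom_apply resF b₀ f
    rw [hresF, hb₀] at this
    rw [← hresF, ← this, minpoly.aeval]
  have hresd₀ : res d₀ ≠ 0 := by
    have := Polynomial.aeval_algHom_apply resF b₀ (Polynomial.derivative f)
    rw [hresF, hb₀] at this
    rw [← hresF, ← this]
    exact hsepβ.aeval_derivative_ne_zero (minpoly.aeval F β)
  obtain ⟨u, hu'⟩ := hu d₀ hresd₀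
  set b : B := b₀ - e₀ * ↑u⁻¹ with hb
  have haeval : Polynomial.aeval b f = 0 := by
    have hsq' : (-(e₀ * ↑u⁻¹)) ^ 2 = 0 := by
      have h2 : e₀ * e₀ = 0 := hsq e₀ e₀ hrese₀ hrese₀
      have : (-(e₀ * ↑u⁻¹)) ^ 2 = e₀ * e₀ * (↑u⁻¹ * ↑u⁻¹) := by ring
      rw [this, h2, zero_mul]
    have key := Polynomial.eval_add_of_sq_eq_zero (f.map (algebraMap F B)) b₀
      (-(e₀ * ↑u⁻¹)) hsq'
    have hbe : b = b₀ + -(e₀ * ↑u⁻¹) := by rw [hb]; ring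
    rw [Polynomial.aeval_def, ← Polynomial.eval_map, hbe, key, Polynomial.derivative_map,
      Polynomial.eval_map, Polynomial.eval_map, ← Polynomial.aeval_def, ← Polynomial.aeval_def,
      ← he₀, ← hd₀]
    have hdu : d₀ * ↑u⁻¹ = 1 := by rw [← hu']; exact u.mul_inv
    calc e₀ + d₀ * -(e₀ * ↑u⁻¹) = e₀ - (d₀ * ↑u⁻¹) * e₀ := by ring
    _ = 0 := by rw [hdu]; ring
  have hresb : res b = β := by
    rw [hb, map_sub, map_mul, hrese₀, zero_mul, sub_zero, hb₀]
  -- build the algebra hom on F⟮β⟯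
  let ψ : AdjoinRoot f →ₐ[F] B := AdjoinRoot.liftAlgHom f (Algebra.ofId F B) b haeval
  let e := IntermediateField.adjoinRootEquivAdjoin F hint
  let τ₁ : (IntermediateField.adjoin F {β}) →ₐ[F] B := ψ.comp e.symm.toAlgHom
  have hτ₁ : ∀ y : IntermediateField.adjoin F {β}, res (τ₁ y) = y := by
    have hext : (resF.comp τ₁).comp e.toAlgHom =
        ((IntermediateField.adjoin F {β}).val).comp e.toAlgHom := by
      refine AdjoinRoot.algHom_ext ?_
      simp only [AlgHom.comp_apply, AlgEquiv.toAlgHom_eq_coe, AlgHom.coe_coe, AlgEquiv.coe_toAlgHom]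
      rw [IntermediateField.adjoinRootEquivAdjoin_apply_root]
      have h1 : e.symm (e (AdjoinRoot.root f)) = AdjoinRoot.root f := e.symm_apply_apply _
      rw [IntermediateField.adjoinRootEquivAdjoin_apply_root] at h1
      show resF (ψ (e.symm _)) = _
      rw [h1, show ψ (AdjoinRoot.root f) = b from AdjoinRoot.liftAlgHom_root _ _ _ _, hresF, hresb]
      rfl
    intro y
    have h2 : e (e.symm y) = y := e.apply_symm_apply y
    have h6 := DFunLike.congr_fun hext (e.symm y)
    simp only [AlgHom.comp_apply, AlgEquiv.toAlgHom_eq_coe, AlgHom.coe_coe, AlgEquiv.coe_toAlgHom, h2] at h6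
    exact h6
  -- restrict scalars to L
  haveI : IsScalarTower L F (IntermediateField.adjoin F {β}) :=
    IntermediateField.isScalarTower _
  letI : Algebra (↥F) (↥((IntermediateField.adjoin F {β}).restrictScalars L)) :=
    (inferInstance : Algebra (↥F) (↥(IntermediateField.adjoin F {β})))
  letI : IsScalarTower L (↥F) (↥((IntermediateField.adjoin F {β}).restrictScalars L)) :=
    (inferInstance : IsScalarTower L (↥F) (↥(IntermediateField.adjoin F {β})))
  exact ⟨AlgHom.restrictScalars L
    (τ₁ : ↥((IntermediateField.adjoin F {β}).restrictScalars L) →ₐ[↥F] B), hτ₁⟩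

/-- Iterate the Hensel step over a finite set of separable algebraic elements. -/
theorem lift_finset (hu : ∀ b : B, res b ≠ 0 → IsUnit b)
    (hsq : ∀ b b' : B, res b = 0 → res b' = 0 → b * b' = 0)
    (hs : Function.Surjective ⇑res)
    (L' : IntermediateField L k) (σ₀ : L' →ₐ[L] B) (hσ₀ : ∀ y : L', res (σ₀ y) = y)
    (u : Finset k) (hint : ∀ β ∈ u, IsIntegral L' β)
    (hsepu : ∀ β ∈ u, (minpoly L' β).Separable) :
    ∃ (F : IntermediateField L k) (σ : F →ₐ[L] B),
      L' ≤ F ∧ (u : Set k) ⊆ (F : Set k) ∧ ∀ y : F, res (σ y) = y := by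
  classical
  induction u using Finset.induction with
  | empty => exact ⟨L', σ₀, le_rfl, by simp, hσ₀⟩
  | @insert β v hβv ih =>
    obtain ⟨F, σ, hL'F, hvF, hσ⟩ := ih (fun γ hγ => hint γ (Finset.mem_insert_of_mem hγ))
      (fun γ hγ => hsepu γ (Finset.mem_insert_of_mem hγ))
    have hβ : IsIntegral L' β := hint β (Finset.mem_insert_self β v)
    have hβsep : (minpoly L' β).Separable := hsepu β (Finset.mem_insert_self β v)
    letI : Algebra L' F := (IntermediateField.inclusion hL'F).toAlgebra
    haveI : IsScalarTower L' F k := IsScalarTower.of_algebraMap_eq fun y => rfl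
    have hintF : IsIntegral F β := hβ.tower_top
    have hsepF : (minpoly F β).Separable :=
      (hβsep.map (f := algebraMap L' F)).of_dvd
        (minpoly.dvd_map_of_isScalarTower L' F β)
    obtain ⟨σ', hσ'⟩ := lift_step res hu hsq hs F σ hσ β hintF hsepF
    have hFsub : ∀ y, y ∈ F →
        y ∈ (IntermediateField.adjoin F ({β} : Set k)).restrictScalars L := by
      intro y hy
      rw [IntermediateField.mem_restrictScalars]
      have h7 : algebraMap F k ⟨y, hy⟩ ∈ IntermediateField.adjoin F ({β} : Set k) :=
        IntermediateField.algebraMap_mem _ _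
      simpa using h7
    refine ⟨(IntermediateField.adjoin F {β}).restrictScalars L, σ', ?_, ?_, hσ'⟩
    · exact fun y hy => hFsub y (hL'F hy)
    · intro x hx
      rcases Finset.mem_insert.mp hx with h | h
      · subst h
        rw [SetLike.mem_coe, IntermediateField.mem_restrictScalars]
        exact IntermediateField.subset_adjoin F ({x} : Set k) (Set.mem_singleton x)
      · exact hFsub x (hvF h)

end LiftLemmas

set_option maxHeartbeats 2000000 in
set_option synthInstance.maxHeartbeats 200000 in
/-- Lemma 3.4: let `(R, m, k)` be a local algebra over a field `L` with
`mⁿ = 0` for some `n`, residue field separable over `L`, and `Ω_{R/L} = 0`.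
Then `R` is a field. -/
theorem stmt9 (L : Type) [Field L]
    (R : Type) [CommRing R] [IsLocalRing R] [Algebra L R]
    (hm : ∃ n : ℕ, IsLocalRing.maximalIdeal R ^ n = ⊥)
    (hsep : IsSeparableFieldExtension L (IsLocalRing.ResidueField R))
    (homega : Subsingleton (KaehlerDifferential L R)) :
    IsField R := by
  classical
  obtain ⟨n, hn⟩ := hm
  rw [IsLocalRing.isField_iff_maximalIdeal_eq]
  have key : IsLocalRing.maximalIdeal R ≤ IsLocalRing.maximalIdeal R ^ 2 := by
    intro x hx
    set m := IsLocalRing.maximalIdeal R with hmm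
    -- Step 1: the element 1 ⊗ x - x ⊗ 1 lies in I ^ 2
    have hz₀I : (1 : R) ⊗ₜ[L] x - x ⊗ₜ[L] (1 : R) ∈ KaehlerDifferential.ideal L R := by
      rw [KaehlerDifferential.ideal, RingHom.mem_ker]
      simp
    haveI hsub : Subsingleton ((KaehlerDifferential.ideal L R).Cotangent) := homega
    have hz₀ : (1 : R) ⊗ₜ[L] x - x ⊗ₜ[L] (1 : R) ∈ (KaehlerDifferential.ideal L R) ^ 2 :=
      (Ideal.toCotangent_eq_zero _ ⟨_, hz₀I⟩).mp (Subsingleton.elim _ _)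
    -- Step 2: decompose it as an L-linear combination of elements
    -- (a ⊗ b) * (1⊗y - y⊗1) * (1⊗z - z⊗1)
    set ω : R → TensorProduct L R R := fun y => (1 : R) ⊗ₜ[L] y - y ⊗ₜ[L] (1 : R) with hω
    set G : Set (TensorProduct L R R) :=
      {q | ∃ a b y z : R, q = (a ⊗ₜ[L] b) * (ω y * ω z)} with hG
    have hGmul : ∀ w ∈ Submodule.span L G, ∀ q : TensorProduct L R R,
        q * w ∈ Submodule.span L G := by
      intro w hw
      refine Submodule.span_induction (p := fun w _ => ∀ q : TensorProduct L R R,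
        q * w ∈ Submodule.span L G) ?_ ?_ ?_ ?_ hw
      · intro w hwG q
        obtain ⟨a, b, y, z, rfl⟩ := hwG
        induction q using TensorProduct.induction_on with
        | zero => rw [zero_mul]; exact Submodule.zero_mem _
        | tmul a' b' =>
          refine Submodule.subset_span ⟨a' * a, b' * b, y, z, ?_⟩
          rw [← mul_assoc, Algebra.TensorProduct.tmul_mul_tmul]
        | add q₁ q₂ h₁ h₂ =>
          rw [add_mul]; exact Submodule.add_mem _ h₁ h₂
      · intro q; rw [mul_zero]; exact Submodule.zero_mem _
      · intro w₁ w₂ _ _ h₁ h₂ q; rw [mul_add]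
        exact Submodule.add_mem _ (h₁ q) (h₂ q)
      · intro c w _ h q
        rw [mul_smul_comm]; exact Submodule.smul_mem _ c (h q)
    have hspan : (1 : R) ⊗ₜ[L] x - x ⊗ₜ[L] (1 : R) ∈ Submodule.span L G := by
      rw [pow_two] at hz₀
      refine Submodule.mul_induction_on hz₀ ?_ ?_
      · intro r hr s hs
        rw [← KaehlerDifferential.span_range_eq_ideal] at hr hs
        refine Submodule.span_induction (p := fun r _ => r * s ∈ Submodule.span L G)
          ?_ ?_ ?_ ?_ hr
        · rintro _ ⟨y, rfl⟩
          refine Submodule.span_induction (p := fun s _ => ω y * s ∈ Submodule.span L G)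
            ?_ ?_ ?_ ?_ hs
          · rintro _ ⟨z, rfl⟩
            refine Submodule.subset_span ⟨1, 1, y, z, ?_⟩
            rw [← Algebra.TensorProduct.one_def, one_mul]
          · show ω y * 0 ∈ Submodule.span L G
            rw [mul_zero]; exact Submodule.zero_mem _
          · intro s₁ s₂ _ _ h₁ h₂
            show ω y * (s₁ + s₂) ∈ Submodule.span L G
            rw [mul_add]; exact Submodule.add_mem _ h₁ h₂
          · intro q s' _ h
            rw [smul_eq_mul, ← mul_assoc, mul_comm (ω y) q, mul_assoc]
            exact hGmul _ h q
        · show (0 : TensorProduct L R R) * s ∈ Submodule.span L G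
          rw [zero_mul]; exact Submodule.zero_mem _
        · intro r₁ r₂ _ _ h₁ h₂
          show (r₁ + r₂) * s ∈ Submodule.span L G
          rw [add_mul]; exact Submodule.add_mem _ h₁ h₂
        · intro q r' _ h
          rw [smul_eq_mul, mul_assoc]
          exact hGmul _ h q
      · intro w₁ w₂ h₁ h₂; exact Submodule.add_mem _ h₁ h₂
    obtain ⟨T, hTG, hzT⟩ := Submodule.mem_span_finite_of_mem_span hspan
    have hch : ∀ w ∈ T, ∃ p : R × R × R × R,
        w = (p.1 ⊗ₜ[L] p.2.1) * (ω p.2.2.1 * ω p.2.2.2) := by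
      intro w hw
      obtain ⟨a, b, y, z, hw'⟩ := hTG hw
      exact ⟨⟨a, b, y, z⟩, hw'⟩
    choose! pfun hpfun using hch
    set S₀ : Finset R := insert x (T.biUnion fun w =>
      {(pfun w).1, (pfun w).2.1, (pfun w).2.2.1, (pfun w).2.2.2}) with hS₀
    set A : Subalgebra L R := Algebra.adjoin L (S₀ : Set R) with hA
    -- the quotient B = R / m^2 and the two projections
    set π : R →ₐ[L] (R ⧸ (m ^ 2)) := Ideal.Quotient.mkₐ L (m ^ 2) with hπ
    set res : R →ₐ[L] IsLocalRing.ResidueField R :=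
      { toRingHom := IsLocalRing.residue R
        commutes' := fun l => rfl } with hres
    have hresm : ∀ r : R, res r = 0 ↔ r ∈ m := by
      intro r
      exact Ideal.Quotient.eq_zero_iff_mem
    set resB : (R ⧸ (m ^ 2)) →ₐ[L] IsLocalRing.ResidueField R :=
      Ideal.Quotient.liftₐ (m ^ 2) res (fun a ha =>
        (hresm a).mpr (Ideal.pow_le_self two_ne_zero ha)) with hresB'
    have hresB : ∀ r : R, resB (π r) = res r := by
      intro r
      rw [hresB', hπ, Ideal.Quotient.liftₐ_apply]
      rfl
    have hu : ∀ b : R ⧸ (m ^ 2), resB b ≠ 0 → IsUnit b := by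
      intro b hb
      obtain ⟨r, rfl⟩ := Ideal.Quotient.mkₐ_surjective L (m ^ 2) b
      rw [show Ideal.Quotient.mkₐ L (m ^ 2) r = π r from rfl] at hb ⊢
      rw [hresB] at hb
      have hrm : r ∉ m := fun hrm => hb ((hresm r).mpr hrm)
      have : IsUnit r := by
        by_contra hnu
        exact hrm (IsLocalRing.mem_maximalIdeal r |>.mpr hnu)
      exact this.map π
    have hsq : ∀ b b' : R ⧸ (m ^ 2), resB b = 0 → resB b' = 0 → b * b' = 0 := by
      intro b b' h h'
      obtain ⟨r, rfl⟩ := Ideal.Quotient.mkₐ_surjective L (m ^ 2) b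
      obtain ⟨r', rfl⟩ := Ideal.Quotient.mkₐ_surjective L (m ^ 2) b'
      rw [show Ideal.Quotient.mkₐ L (m ^ 2) r = π r from rfl, hresB] at h
      rw [show Ideal.Quotient.mkₐ L (m ^ 2) r' = π r' from rfl, hresB] at h'
      have : r * r' ∈ m ^ 2 := by
        rw [pow_two]
        exact Ideal.mul_mem_mul ((hresm r).mp h) ((hresm r').mp h')
      calc Ideal.Quotient.mkₐ L (m ^ 2) r * Ideal.Quotient.mkₐ L (m ^ 2) r'
          = π (r * r') := by rw [map_mul]
      _ = 0 := by
          rw [hπ, Ideal.Quotient.mkₐ_eq_mk]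
          exact Ideal.Quotient.eq_zero_iff_mem.mpr this
    have hsB : Function.Surjective ⇑resB := by
      intro c
      obtain ⟨r, hr⟩ := IsLocalRing.residue_surjective (R := R) c
      exact ⟨π r, by rw [hresB]; exact hr⟩
    -- separability data for the residues of S₀
    set sbar : Finset (IsLocalRing.ResidueField R) := S₀.image (fun r => res r) with hsbar
    obtain ⟨t, htsub, hti, hEsep⟩ := hsep sbar
    set E := IntermediateField.adjoin L ((sbar : Set (IsLocalRing.ResidueField R))) with hE
    -- lift the subfield E of the residue field to B
    obtain ⟨σ₀, hσ₀⟩ := lift_base resB hu hsB t hti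
    obtain ⟨F, σF, hL'F, hsbarF, hσF⟩ := lift_finset resB hu hsq hsB _ σ₀ hσ₀ sbar
      (fun β hβ => (hEsep β (IntermediateField.subset_adjoin _ _ hβ)).1)
      (fun β hβ => (hEsep β (IntermediateField.subset_adjoin _ _ hβ)).2)
    have hEF : E ≤ F := IntermediateField.adjoin_le_iff.mpr hsbarF
    set τ : E →ₐ[L] (R ⧸ (m ^ 2)) := σF.comp (IntermediateField.inclusion hEF) with hτdef
    have hτ : ∀ y : E, resB (τ y) = y := by
      intro y
      rw [hτdef, AlgHom.comp_apply, hσF]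
      rfl
    -- extend τ L-linearly to the whole residue field
    set Esub : Submodule L (IsLocalRing.ResidueField R) :=
      Subalgebra.toSubmodule E.toSubalgebra with hEsub
    obtain ⟨Ec, hEc⟩ := Submodule.exists_isCompl Esub
    have hmemE : ∀ v : Esub, (v : IsLocalRing.ResidueField R) ∈ E := fun v => v.2
    set j : Esub →ₗ[L] (R ⧸ (m ^ 2)) := τ.toLinearMap
    set Tlin : IsLocalRing.ResidueField R →ₗ[L] (R ⧸ (m ^ 2)) :=
      j.comp (Submodule.linearProjOfIsCompl Esub Ec hEc) with hTlin
    have hT : ∀ y (hy : y ∈ E), Tlin y = τ ⟨y, hy⟩ := by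
      intro y hy
      have h9 : Submodule.linearProjOfIsCompl Esub Ec hEc y = ⟨y, hy⟩ :=
        Submodule.linearProjOfIsCompl_apply_left hEc ⟨y, hy⟩
      rw [hTlin, LinearMap.comp_apply, h9]
      rfl
    -- the "derivation-like" map g
    set g : R →ₗ[L] (R ⧸ (m ^ 2)) := π.toLinearMap - Tlin.comp res.toLinearMap with hgdef'
    have hgdef : ∀ r : R, g r = π r - Tlin (res r) := fun r => rfl
    have hAE : ∀ r ∈ A, res r ∈ E := by
      intro r hr
      rw [hA] at hr
      refine Algebra.adjoin_induction ?_ ?_ ?_ ?_ hr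
      · intro s hsS
        exact IntermediateField.subset_adjoin _ _ (Finset.mem_image_of_mem _ hsS)
      · intro l
        rw [AlgHom.commutes]
        exact E.algebraMap_mem l
      · intro r₁ r₂ _ _ h₁ h₂
        rw [map_add]; exact E.add_mem h₁ h₂
      · intro r₁ r₂ _ _ h₁ h₂
        rw [map_mul]; exact E.mul_mem h₁ h₂
    have hg0 : ∀ r, r ∈ A → resB (g r) = 0 := by
      intro r hr
      rw [hgdef, map_sub, hresB, hT (res r) (hAE r hr), hτ, sub_self]
    have hτg : ∀ r (hr : r ∈ A), τ ⟨res r, hAE r hr⟩ = π r - g r := by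
      intro r hr
      rw [hgdef, hT (res r) (hAE r hr)]
      ring
    have hleib : ∀ r s, r ∈ A → s ∈ A → g (r * s) = π r * g s + π s * g r := by
      intro r s hr hs
      have hgg : g r * g s = 0 := hsq _ _ (hg0 r hr) (hg0 s hs)
      have hrsA : r * s ∈ A := mul_mem hr hs
      have h11 : Tlin (res (r * s)) = τ ⟨res r, hAE r hr⟩ * τ ⟨res s, hAE s hs⟩ := by
        have hmem : res r * res s ∈ E := E.mul_mem (hAE r hr) (hAE s hs)
        calc Tlin (res (r * s)) = Tlin (res r * res s) := by rw [map_mul]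
        _ = τ ⟨res r * res s, hmem⟩ := hT _ hmem
        _ = τ ((⟨res r, hAE r hr⟩ : E) * ⟨res s, hAE s hs⟩) := rfl
        _ = τ ⟨res r, hAE r hr⟩ * τ ⟨res s, hAE s hs⟩ := map_mul τ _ _
      rw [hgdef, h11, hτg r hr, hτg s hs, map_mul]
      linear_combination -hgg
    -- the linear functional F on the tensor square
    set bilin : R →ₗ[L] R →ₗ[L] (R ⧸ (m ^ 2)) := LinearMap.mk₂ L (fun a b => π a * g b)
      (fun a a' b => by
        show π (a + a') * g b = π a * g b + π a' * g b
        rw [map_add, add_mul])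
      (fun c a b => by
        show π (c • a) * g b = c • (π a * g b)
        rw [map_smul, smul_mul_assoc])
      (fun a b b' => by
        show π a * g (b + b') = π a * g b + π a * g b'
        rw [map_add, mul_add])
      (fun c a b => by
        show π a * g (c • b) = c • (π a * g b)
        rw [map_smul, mul_smul_comm]) with hbilin
    set Flin : TensorProduct L R R →ₗ[L] (R ⧸ (m ^ 2)) := TensorProduct.lift bilin with hFlin
    have hFtmul : ∀ a b : R, Flin (a ⊗ₜ[L] b) = π a * g b := by
      intro a b
      rw [hFlin, TensorProduct.lift.tmul]
      rfl
    have hFvanish : ∀ w ∈ T, Flin w = 0 := by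
      intro w hw
      have hmemA : ∀ r ∈ ({(pfun w).1, (pfun w).2.1, (pfun w).2.2.1, (pfun w).2.2.2} :
          Finset R), r ∈ A := by
        intro r hr
        exact Algebra.subset_adjoin
          (Finset.mem_insert_of_mem (Finset.mem_biUnion.mpr ⟨w, hw, hr⟩))
      set a := (pfun w).1 with ha'
      set b := (pfun w).2.1 with hb'
      set y := (pfun w).2.2.1 with hy'
      set z := (pfun w).2.2.2 with hz'
      have haA : a ∈ A := hmemA a (by simp)
      have hbA : b ∈ A := hmemA b (by simp)
      have hyA : y ∈ A := hmemA y (by simp)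
      have hzA : z ∈ A := hmemA z (by simp)
      have hωyz : ω y * ω z = (1 : R) ⊗ₜ[L] (y * z) - z ⊗ₜ[L] y - y ⊗ₜ[L] z
          + (y * z) ⊗ₜ[L] (1 : R) := by
        rw [hω]
        simp only [sub_mul, mul_sub, Algebra.TensorProduct.tmul_mul_tmul, one_mul, mul_one]
        abel
      have hexp : w = a ⊗ₜ[L] (b * (y * z)) - (a * z) ⊗ₜ[L] (b * y)
          - (a * y) ⊗ₜ[L] (b * z) + (a * (y * z)) ⊗ₜ[L] b := by
        rw [hpfun w hw, hωyz]
        simp only [mul_sub, mul_add, Algebra.TensorProduct.tmul_mul_tmul, one_mul, mul_one]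
        rfl
      rw [hexp]
      simp only [map_sub, map_add, hFtmul]
      rw [hleib b (y * z) hbA (mul_mem hyA hzA), hleib y z hyA hzA,
        hleib b y hbA hyA, hleib b z hbA hzA]
      simp only [map_mul]
      ring
    have hFz : Flin ((1 : R) ⊗ₜ[L] x - x ⊗ₜ[L] (1 : R)) = 0 := by
      have hker : Submodule.span L (T : Set (TensorProduct L R R)) ≤ LinearMap.ker Flin := by
        rw [Submodule.span_le]
        intro w hw
        exact LinearMap.mem_ker.mpr (hFvanish w hw)
      exact LinearMap.mem_ker.mp (hker hzT)
    have hg1 : g 1 = 0 := by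
      rw [hgdef, map_one, map_one, hT 1 E.one_mem,
        show (⟨1, E.one_mem⟩ : E) = 1 from rfl, map_one, sub_self]
    have hgx : g x = π x := by
      rw [hgdef, (hresm x).mpr hx, map_zero, sub_zero]
    rw [map_sub, hFtmul, hFtmul, map_one, one_mul, hg1, mul_zero, sub_zero, hgx] at hFz
    rw [hπ, Ideal.Quotient.mkₐ_eq_mk] at hFz
    exact Ideal.Quotient.eq_zero_iff_mem.mp hFz
  have hle : ∀ j : ℕ, IsLocalRing.maximalIdeal R ≤ IsLocalRing.maximalIdeal R ^ j := by
    intro j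
    induction j with
    | zero => simpa using le_top
    | succ j ih =>
      calc IsLocalRing.maximalIdeal R ≤ IsLocalRing.maximalIdeal R ^ 2 := key
      _ = IsLocalRing.maximalIdeal R * IsLocalRing.maximalIdeal R := sq _
      _ ≤ IsLocalRing.maximalIdeal R ^ j * IsLocalRing.maximalIdeal R :=
          Ideal.mul_mono_left ih
      _ = IsLocalRing.maximalIdeal R ^ (j + 1) := (pow_succ _ j).symm
  exact le_bot_iff.mp (hn ▸ hle n)
end

section
/- Let k be a perfect field and A a k-algebra whose localization at every maximal ideal is Noetherian. If Ω_{A/k} = 0, then A is reduced. -/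
open Polynomial

section CoeffField

variable {k B L : Type} [Field k] [PerfectField k] [CommRing B] [Field L]
  [Algebra k B] [Algebra k L]

/-- A subalgebra of `B` on which `ψ` is injective and which is closed under inverses. -/
def IsGoodSub (ψ : B →ₐ[k] L) (C : Subalgebra k B) : Prop :=
  (∀ c ∈ C, ψ c = 0 → c = 0) ∧ (∀ c ∈ C, c ≠ 0 → ∃ d ∈ C, c * d = 1)

variable (ψ : B →ₐ[k] L)

lemma stepGood (hu : ∀ b : B, ψ b ≠ 0 → IsUnit b)
    (C : Subalgebra k B) (b : B) (hbC : b ∉ C)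
    (hkill : ∀ f : Polynomial ↥C, ψ (Polynomial.aeval b f) = 0 → Polynomial.aeval b f = 0) :
    ∃ C', IsGoodSub ψ C' ∧ C < C' := by
  have hnt : Nontrivial B := by
    refine ⟨0, 1, fun h => ?_⟩
    have : (0 : L) = 1 := by rw [← map_zero ψ, h, map_one]
    exact zero_ne_one this
  set D : Subalgebra k B := ((Polynomial.aeval (R := ↥C) b).range.restrictScalars k) with hD
  have hmemD : ∀ z : B, z ∈ D ↔ ∃ f : Polynomial ↥C, Polynomial.aeval b f = z := by
    intro z
    rw [hD, Subalgebra.mem_restrictScalars, AlgHom.mem_range]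
  have hDkill : ∀ z ∈ D, ψ z = 0 → z = 0 := by
    intro z hz h0
    obtain ⟨f, rfl⟩ := (hmemD z).1 hz
    exact hkill f h0
  have hDunit : ∀ z ∈ D, z ≠ 0 → IsUnit z := by
    intro z hz hz0
    refine hu z fun h0 => hz0 (hDkill z hz h0)
  have hmulne : ∀ v₁ v₂ : B, v₁ ∈ D → v₂ ∈ D → v₁ ≠ 0 → v₂ ≠ 0 → v₁ * v₂ ≠ 0 := by
    intro v₁ v₂ h1 h2 h10 h20 h
    obtain ⟨w, hw⟩ := hDunit v₁ h1 h10
    apply h20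
    have := congrArg (fun t => (↑w⁻¹ : B) * t) h
    simpa [← hw, ← mul_assoc] using this
  refine ⟨{ carrier := {z : B | ∃ u ∈ D, ∃ v ∈ D, v ≠ 0 ∧ z * v = u}
            mul_mem' := ?_
            one_mem' := ⟨1, D.one_mem, 1, D.one_mem, one_ne_zero, by ring⟩
            add_mem' := ?_
            zero_mem' := ⟨0, D.zero_mem, 1, D.one_mem, one_ne_zero, by ring⟩
            algebraMap_mem' := fun r =>
              ⟨algebraMap k B r, D.algebraMap_mem r, 1, D.one_mem, one_ne_zero, by ring⟩ },
          ⟨?_, ?_⟩, ?_⟩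
  · rintro z₁ z₂ ⟨u₁, hu₁, v₁, hv₁, hv₁0, he₁⟩ ⟨u₂, hu₂, v₂, hv₂, hv₂0, he₂⟩
    refine ⟨u₁ * u₂, mul_mem hu₁ hu₂, v₁ * v₂, mul_mem hv₁ hv₂,
      hmulne _ _ hv₁ hv₂ hv₁0 hv₂0, by rw [← he₁, ← he₂]; ring⟩
  · rintro z₁ z₂ ⟨u₁, hu₁, v₁, hv₁, hv₁0, he₁⟩ ⟨u₂, hu₂, v₂, hv₂, hv₂0, he₂⟩
    refine ⟨u₁ * v₂ + u₂ * v₁, add_mem (mul_mem hu₁ hv₂) (mul_mem hu₂ hv₁),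
      v₁ * v₂, mul_mem hv₁ hv₂, hmulne _ _ hv₁ hv₂ hv₁0 hv₂0, by rw [← he₁, ← he₂]; ring⟩
  · rintro z ⟨u, hu', v, hv, hv0, he⟩ hz0
    have : ψ z * ψ v = ψ u := by rw [← map_mul, he]
    have hvu : IsUnit v := hDunit v hv hv0
    have huz : u = 0 := by
      apply hDkill u hu'
      rw [← this, hz0, zero_mul]
    obtain ⟨w, hw⟩ := hvu
    have := congrArg (fun t => t * (↑w⁻¹ : B)) (he.trans huz)
    simpa [← hw, mul_assoc] using this
  · rintro z ⟨u, hu', v, hv, hv0, he⟩ hz0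
    have hune : u ≠ 0 := by
      rintro rfl
      apply hz0
      obtain ⟨w, hw⟩ := hDunit v hv hv0
      have := congrArg (fun t => t * (↑w⁻¹ : B)) he
      simpa [← hw, mul_assoc] using this
    have hψz : ψ z ≠ 0 := by
      intro h0
      apply hune
      apply hDkill u hu'
      rw [← he, map_mul, h0, zero_mul]
    obtain ⟨w, hw⟩ := hu z hψz
    refine ⟨↑w⁻¹, ⟨v, hv, u, hu', hune, ?_⟩, by rw [← hw]; exact w.mul_inv⟩
    -- w⁻¹ * u = v
    rw [← he, ← hw]
    calc (↑w⁻¹ : B) * (↑w * v) = (↑w⁻¹ * ↑w) * v := by ring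
    _ = v := by rw [w.inv_mul, one_mul]
  · refine lt_of_le_of_ne (fun c hc => ?_) (fun h => hbC ?_)
    · have hcD : c ∈ D := by
        rw [hmemD]
        exact ⟨Polynomial.C ⟨c, hc⟩, by simp [Subalgebra.algebraMap_eq]⟩
      exact ⟨c, hcD, 1, D.one_mem, one_ne_zero, by ring⟩
    · have hbD : b ∈ D := by
        rw [hmemD]; exact ⟨Polynomial.X, by simp⟩
      rw [h]
      exact ⟨b, hbD, 1, D.one_mem, one_ne_zero, by ring⟩

end CoeffField

section CoeffField2

variable {k B L : Type} [Field k] [PerfectField k] [CommRing B] [Field L]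
  [Algebra k B] [Algebra k L] (ψ : B →ₐ[k] L)

lemma existsMaxGood (C₀ : Subalgebra k B) (h₀ : IsGoodSub ψ C₀) :
    ∃ M : Subalgebra k B, C₀ ≤ M ∧ IsGoodSub ψ M ∧
      ∀ C', IsGoodSub ψ C' → M ≤ C' → C' ≤ M := by
  set S : Set (Subalgebra k B) := {C | C₀ ≤ C ∧ IsGoodSub ψ C} with hS
  have hzorn : ∀ c ⊆ S, IsChain (· ≤ ·) c → ∀ y ∈ c, ∃ ub ∈ S, ∀ z ∈ c, z ≤ ub := by
    intro c hcS hchain y hy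
    haveI : Nonempty c := ⟨⟨y, hy⟩⟩
    have hdir : Directed (· ≤ ·) (fun C : c => (C : Subalgebra k B)) :=
      hchain.directedOn.directed_val
    set U : Subalgebra k B := ⨆ C : c, (C : Subalgebra k B) with hU
    have hmemU : ∀ z : B, z ∈ U ↔ ∃ C ∈ c, z ∈ C := by
      intro z
      constructor
      · intro hz
        have := Subalgebra.coe_iSup_of_directed hdir
        have hz' : z ∈ (↑U : Set B) := hz
        rw [this] at hz'
        obtain ⟨s, ⟨C, rfl⟩, hzs⟩ := hz'
        exact ⟨C, C.2, hzs⟩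
      · rintro ⟨C, hC, hzC⟩
        exact le_iSup (fun C : c => (C : Subalgebra k B)) ⟨C, hC⟩ hzC
    refine ⟨U, ⟨le_trans (hcS hy).1 (le_iSup (fun C : c => (C : Subalgebra k B)) ⟨y, hy⟩), ?_, ?_⟩, fun z hz => le_iSup (fun C : c => (C : Subalgebra k B)) ⟨z, hz⟩⟩
    · intro z hz h0
      obtain ⟨C, hC, hzC⟩ := (hmemU z).1 hz
      exact (hcS hC).2.1 z hzC h0
    · intro z hz h0
      obtain ⟨C, hC, hzC⟩ := (hmemU z).1 hz
      obtain ⟨d, hd, hzd⟩ := (hcS hC).2.2 z hzC h0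
      exact ⟨d, (hmemU d).2 ⟨C, hC, hd⟩, hzd⟩
  obtain ⟨M, hM0, hMmax⟩ := zorn_le_nonempty₀ S hzorn C₀ ⟨le_refl _, h₀⟩
  refine ⟨M, hMmax.prop.1, hMmax.prop.2, fun C' hC' hMC' => ?_⟩
  exact hMmax.le_of_ge ⟨le_trans hMmax.prop.1 hMC', hC'⟩ hMC'

/-- Package: the image of a good subalgebra as an intermediate field, with equivalence. -/
lemma goodEquiv (M : Subalgebra k B) (hM : IsGoodSub ψ M) :
    ∃ (K : IntermediateField k L) (eqv : ↥M ≃ₐ[k] ↥K),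
      (∀ c : ↥M, (algebraMap ↥K L) (eqv c) = ψ ↑c) ∧
      (∀ x : L, x ∈ K ↔ ∃ c ∈ M, ψ c = x) := by
  set E : ↥M →ₐ[k] L := ψ.comp M.val with hE
  have hEinj : Function.Injective E := by
    intro c₁ c₂ h
    have h0 : ψ ((c₁ : B) - c₂) = 0 := by
      rw [map_sub]
      simpa [hE] using sub_eq_zero_of_eq h
    have := hM.1 _ (sub_mem c₁.2 c₂.2) h0
    exact Subtype.ext (sub_eq_zero.1 this)
  have hrange_inv : ∀ x ∈ E.range, x⁻¹ ∈ E.range := by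
    rintro x ⟨c, rfl⟩
    show (E c)⁻¹ ∈ E.range
    by_cases h0 : E c = 0
    · rw [h0, inv_zero]
      exact ⟨0, map_zero E⟩
    · have hc0 : (c : B) ≠ 0 := by
        rintro hc
        apply h0
        show ψ ↑c = 0
        rw [hc, map_zero]
      obtain ⟨d, hd, hcd⟩ := hM.2 ↑c c.2 hc0
      refine ⟨⟨d, hd⟩, ?_⟩
      have : E c * E ⟨d, hd⟩ = 1 := by
        show ψ ↑c * ψ d = 1
        rw [← map_mul, hcd, map_one]
      exact (inv_eq_of_mul_eq_one_right this).symm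
  set K : IntermediateField k L :=
    { E.range with
      inv_mem' := hrange_inv } with hK
  have hmemK : ∀ x : L, x ∈ K ↔ ∃ c, E c = x := fun x => Iff.rfl
  have hmemK' : ∀ (c : ↥M), E c ∈ K := fun c => (hmemK (E c)).2 ⟨c, rfl⟩
  set E' : ↥M →ₐ[k] ↥K :=
    { toFun := fun c => ⟨E c, hmemK' c⟩
      map_one' := Subtype.ext (map_one E)
      map_mul' := fun a b => Subtype.ext (map_mul E a b)
      map_zero' := Subtype.ext (map_zero E)
      map_add' := fun a b => Subtype.ext (map_add E a b)
      commutes' := fun r => Subtype.ext (E.commutes r) } with hE'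
  have hE'inj : Function.Injective E' := by
    intro a b h
    exact hEinj (congrArg Subtype.val h)
  have hE'surj : Function.Surjective E' := by
    rintro ⟨x, hx⟩
    obtain ⟨c, hc⟩ := (hmemK x).1 hx
    exact ⟨c, Subtype.ext hc⟩
  refine ⟨K, AlgEquiv.ofBijective E' ⟨hE'inj, hE'surj⟩, fun c => ?_, fun x => ?_⟩
  · rw [IntermediateField.algebraMap_apply]
    rfl
  · rw [hmemK]
    constructor
    · rintro ⟨c, rfl⟩
      exact ⟨↑c, c.2, rfl⟩
    · rintro ⟨c, hc, rfl⟩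
      exact ⟨⟨c, hc⟩, rfl⟩


lemma pushAeval (M : Subalgebra k B) (K : IntermediateField k L) (eqv : ↥M ≃ₐ[k] ↥K)
    (heqv : ∀ c : ↥M, (algebraMap ↥K L) (eqv c) = ψ ↑c)
    (b : B) (f : Polynomial ↥M) :
    ψ (Polynomial.aeval b f) = Polynomial.aeval (ψ b) (f.map eqv.toAlgHom.toRingHom) := by
  rw [Polynomial.aeval_def, Polynomial.aeval_def, Polynomial.eval₂_map]
  have : ψ.toRingHom (eval₂ (algebraMap ↥M B) b f)
      = eval₂ (ψ.toRingHom.comp (algebraMap ↥M B)) (ψ.toRingHom b) f :=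
    Polynomial.hom_eval₂ f (algebraMap ↥M B) ψ.toRingHom b
  have hcomp : ψ.toRingHom.comp (algebraMap ↥M B)
      = (algebraMap ↥K L).comp eqv.toAlgHom.toRingHom := by
    refine RingHom.ext fun c => ?_
    have := heqv c
    simpa [Subalgebra.algebraMap_eq] using this.symm
  calc ψ (eval₂ (algebraMap ↥M B) b f)
      = eval₂ (ψ.toRingHom.comp (algebraMap ↥M B)) (ψ b) f := this
    _ = eval₂ ((algebraMap ↥K L).comp eqv.toAlgHom.toRingHom) (ψ b) f := by rw [hcomp]

lemma killAeval (M : Subalgebra k B) (K : IntermediateField k L) (eqv : ↥M ≃ₐ[k] ↥K)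
    (heqv : ∀ c : ↥M, (algebraMap ↥K L) (eqv c) = ψ ↑c)
    (x : L) (b : B) (hψb : ψ b = x)
    (h0 : Polynomial.aeval b ((minpoly ↥K x).map eqv.symm.toAlgHom.toRingHom) = 0) :
    ∀ f : Polynomial ↥M, ψ (Polynomial.aeval b f) = 0 → Polynomial.aeval b f = 0 := by
  intro f hf
  have hpush := pushAeval ψ M K eqv heqv b f
  have haev : Polynomial.aeval x (f.map eqv.toAlgHom.toRingHom) = 0 := by
    rw [← hψb, ← hpush, hf]
  obtain ⟨h, hh⟩ := minpoly.dvd ↥K x haev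
  have hfeq : f = ((minpoly ↥K x).map eqv.symm.toAlgHom.toRingHom) *
      (h.map eqv.symm.toAlgHom.toRingHom) := by
    have hmm := congrArg (Polynomial.map eqv.symm.toAlgHom.toRingHom) hh
    rw [Polynomial.map_map] at hmm
    have hid : eqv.symm.toAlgHom.toRingHom.comp eqv.toAlgHom.toRingHom = RingHom.id ↥M :=
      RingHom.ext fun c => eqv.symm_apply_apply c
    rw [hid, Polynomial.map_id, Polynomial.map_mul] at hmm
    exact hmm
  rw [hfeq, map_mul, h0, zero_mul]


theorem exists_algSection
    (hs : Function.Surjective ψ)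
    (hker : ∀ a b : B, ψ a = 0 → ψ b = 0 → a * b = 0)
    (hu : ∀ b : B, ψ b ≠ 0 → IsUnit b) :
    ∃ s : L →ₐ[k] B, ∀ x, ψ (s x) = x := by
  have hnt : Nontrivial B := by
    refine ⟨0, 1, fun h => ?_⟩
    have : (0 : L) = 1 := by rw [← map_zero ψ, h, map_one]
    exact zero_ne_one this
  -- the common "finish" step
  have finish : ∀ M : Subalgebra k B, IsGoodSub ψ M → (∀ x : L, ∃ c ∈ M, ψ c = x) →
      ∃ s : L →ₐ[k] B, ∀ x, ψ (s x) = x := by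
    intro M hM hsurj
    obtain ⟨K, eqv, heqv, hmem⟩ := goodEquiv ψ M hM
    have hK : K = ⊤ := by
      rw [eq_top_iff]
      exact fun x _ => (hmem x).2 (hsurj x)
    subst hK
    set s₀ : L →ₐ[k] ↥M :=
      (eqv.symm.toAlgHom).comp (IntermediateField.topEquiv (F := k) (E := L)).symm.toAlgHom
      with hs₀
    refine ⟨M.val.comp s₀, fun x => ?_⟩
    show ψ ↑(eqv.symm (IntermediateField.topEquiv.symm x)) = x
    have := heqv (eqv.symm (IntermediateField.topEquiv.symm x))
    rw [eqv.apply_symm_apply] at this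
    rw [← this, IntermediateField.algebraMap_apply]
    rfl
  obtain hchar | ⟨p, hp, hcharp⟩ :
      CharZero k ∨ ∃ p : ℕ, p.Prime ∧ CharP k p := by
    rcases CharP.char_is_prime_or_zero k (ringChar k) with h | h
    · exact Or.inr ⟨ringChar k, h, ringChar.charP k⟩
    · haveI : CharP k 0 := h ▸ ringChar.charP k
      exact Or.inl (CharP.charP_to_charZero k)
  · -- characteristic zero
    haveI := hchar
    haveI : CharZero L := charZero_of_injective_algebraMap (algebraMap k L).injective
    have h₀ : IsGoodSub ψ (⊥ : Subalgebra k B) := by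
      constructor
      · intro c hc h0
        obtain ⟨r, rfl⟩ := Algebra.mem_bot.1 hc
        have : algebraMap k L r = 0 := by rw [← h0, ψ.commutes]
        have hr : r = 0 := by
          apply (algebraMap k L).injective
          rw [this, map_zero]
        rw [hr, map_zero]
      · intro c hc hc0
        obtain ⟨r, rfl⟩ := Algebra.mem_bot.1 hc
        have hr : r ≠ 0 := fun h => hc0 (by rw [h, map_zero])
        exact ⟨algebraMap k B r⁻¹, Algebra.mem_bot.2 ⟨r⁻¹, rfl⟩,
          by rw [← map_mul, mul_inv_cancel₀ hr, map_one]⟩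
    obtain ⟨M, hM0, hMgood, hMmax⟩ := existsMaxGood ψ ⊥ h₀
    refine finish M hMgood ?_
    by_contra hns
    push_neg at hns
    obtain ⟨x, hx⟩ := hns
    obtain ⟨K, eqv, heqv, hmem⟩ := goodEquiv ψ M hMgood
    have hxK : x ∉ K := by
      intro h
      obtain ⟨c, hc, he⟩ := (hmem x).1 h
      exact hx c hc he
    by_cases hint : IsIntegral ↥K x
    · -- separable (Hensel) step
      have hsep : (minpoly ↥K x).Separable := (minpoly.irreducible hint).separable
      obtain ⟨b₀, hb₀⟩ := hs x
      set N : Polynomial ↥M := (minpoly ↥K x).map eqv.symm.toAlgHom.toRingHom with hN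
      have hNσ : N.map eqv.toAlgHom.toRingHom = minpoly ↥K x := by
        rw [hN, Polynomial.map_map]
        have hid : eqv.toAlgHom.toRingHom.comp eqv.symm.toAlgHom.toRingHom = RingHom.id ↥K :=
          RingHom.ext fun c => eqv.apply_symm_apply c
        rw [hid, Polynomial.map_id]
      have hNval : ∀ c : B, ψ (Polynomial.aeval c N) = Polynomial.aeval (ψ c) (minpoly ↥K x) := by
        intro c
        rw [pushAeval ψ M K eqv heqv c N, hNσ]
      have hNval' : ∀ c : B, ψ (Polynomial.aeval c (derivative N))
          = Polynomial.aeval (ψ c) (derivative (minpoly ↥K x)) := by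
        intro c
        rw [pushAeval ψ M K eqv heqv c (derivative N), ← Polynomial.derivative_map, hNσ]
      have hψN0 : ψ (Polynomial.aeval b₀ N) = 0 := by
        rw [hNval, hb₀, minpoly.aeval]
      have hψN' : ψ (Polynomial.aeval b₀ (derivative N)) ≠ 0 := by
        rw [hNval', hb₀]
        exact hsep.aeval_derivative_ne_zero (minpoly.aeval _ _)
      set U := (hu _ hψN').unit with hU
      set ε : B := -(Polynomial.aeval b₀ N * ↑U⁻¹) with hε
      have hψε : ψ ε = 0 := by
        rw [hε, map_neg, map_mul, hψN0, zero_mul, neg_zero]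
      have hε2 : ε ^ 2 = 0 := by
        rw [pow_two]; exact hker ε ε hψε hψε
      set b : B := b₀ + ε with hb
      have hψb : ψ b = x := by rw [hb, map_add, hψε, add_zero, hb₀]
      have hbM : b ∉ M := fun h => hx b h hψb
      have haevN : Polynomial.aeval b N = 0 := by
        have hNe : ∀ (g : Polynomial ↥M) (c : B),
            Polynomial.aeval c g = (g.map (algebraMap ↥M B)).eval c := by
          intro g c
          rw [Polynomial.eval_map, Polynomial.aeval_def]
        have hder : derivative (N.map (algebraMap ↥M B))
            = (derivative N).map (algebraMap ↥M B) := Polynomial.derivative_map N _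
        rw [hNe, hb, Polynomial.eval_add_of_sq_eq_zero _ b₀ ε hε2, hder, ← hNe, ← hNe]
        have hUspec : (↑U : B) = Polynomial.aeval b₀ (derivative N) := (hu _ hψN').unit_spec
        rw [← hUspec, hε]
        calc (Polynomial.aeval b₀ N : B) + ↑U * -(Polynomial.aeval b₀ N * ↑U⁻¹)
            = Polynomial.aeval b₀ N - (↑U * ↑U⁻¹) * Polynomial.aeval b₀ N := by ring
          _ = 0 := by rw [U.mul_inv, one_mul, sub_self]
      have hkill := killAeval ψ M K eqv heqv x b hψb haevN
      obtain ⟨C', hC'good, hlt⟩ := stepGood ψ hu M b hbM hkill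
      exact hlt.2 (hMmax C' hC'good hlt.1)
    · -- transcendental step
      obtain ⟨b, hb⟩ := hs x
      have hbM : b ∉ M := fun h => hx b h hb
      have hkill : ∀ f : Polynomial ↥M, ψ (Polynomial.aeval b f) = 0 →
          Polynomial.aeval b f = 0 := by
        intro f hf
        have haev : Polynomial.aeval x (f.map eqv.toAlgHom.toRingHom) = 0 := by
          rw [← hb, ← pushAeval ψ M K eqv heqv b f, hf]
        have hf0 : f.map eqv.toAlgHom.toRingHom = 0 := by
          by_contra hne
          exact hint (isAlgebraic_iff_isIntegral.1 ⟨_, hne, haev⟩)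
        have : f = 0 :=
          Polynomial.map_injective eqv.toAlgHom.toRingHom
            (fun a b h => eqv.injective h) (by rw [hf0, Polynomial.map_zero])
        rw [this, map_zero]
      obtain ⟨C', hC'good, hlt⟩ := stepGood ψ hu M b hbM hkill
      exact hlt.2 (hMmax C' hC'good hlt.1)
  · -- characteristic p
    haveI := hcharp
    haveI := Fact.mk hp
    haveI : CharP B p := charP_of_injective_algebraMap (algebraMap k B).injective p
    haveI : CharP L p := charP_of_injective_algebraMap (algebraMap k L).injective p
    have hzero : ∀ y : B, ψ y = 0 → y ^ p = 0 := by
      intro y hy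
      have h2 : y ^ 2 = 0 := by rw [pow_two]; exact hker y y hy hy
      calc y ^ p = y ^ 2 * y ^ (p - 2) := by rw [← pow_add]; congr 1; have h2p := hp.two_le; omega
        _ = 0 := by rw [h2, zero_mul]
    set C₀ : Subalgebra k B :=
      { carrier := Set.range (· ^ p : B → B)
        mul_mem' := by rintro a b ⟨y, rfl⟩ ⟨z, rfl⟩; exact ⟨y * z, mul_pow y z p⟩
        one_mem' := ⟨1, one_pow p⟩
        add_mem' := by rintro a b ⟨y, rfl⟩ ⟨z, rfl⟩; exact ⟨y + z, add_pow_char y z p⟩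
        zero_mem' := ⟨0, zero_pow hp.ne_zero⟩
        algebraMap_mem' := by
          intro r
          refine ⟨algebraMap k B ((frobeniusEquiv k p).symm r), ?_⟩
          dsimp only
          rw [← map_pow]
          congr 1
          have h1 := (frobeniusEquiv k p).apply_symm_apply r
          rwa [frobeniusEquiv_apply, frobenius_def] at h1 } with hC₀
    have h₀ : IsGoodSub ψ C₀ := by
      constructor
      · rintro c ⟨y, rfl⟩ h0
        dsimp only at h0 ⊢
        have hψy : ψ y = 0 := by
          rw [map_pow] at h0
          exact pow_eq_zero_iff hp.ne_zero |>.1 h0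
        exact hzero y hψy
      · rintro c ⟨y, rfl⟩ hc0
        dsimp only at hc0 ⊢
        have hψy : ψ y ≠ 0 := fun h => hc0 (hzero y h)
        set Y := (hu y hψy).unit with hY
        refine ⟨(↑Y⁻¹ : B) ^ p, ⟨(↑Y⁻¹ : B), rfl⟩, ?_⟩
        rw [← mul_pow]
        have : y * ↑Y⁻¹ = 1 := by
          rw [show y = ↑Y from (hu y hψy).unit_spec.symm, Y.mul_inv]
        rw [this, one_pow]
    obtain ⟨M, hM0, hMgood, hMmax⟩ := existsMaxGood ψ C₀ h₀
    refine finish M hMgood ?_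
    by_contra hns
    push_neg at hns
    obtain ⟨x, hx⟩ := hns
    obtain ⟨K, eqv, heqv, hmem⟩ := goodEquiv ψ M hMgood
    have hxK : x ∉ K := by
      intro h
      obtain ⟨c, hc, he⟩ := (hmem x).1 h
      exact hx c hc he
    haveI : CharP ↥K p := (algebraMap ↥K L).charP (algebraMap ↥K L).injective p
    obtain ⟨β, hβ⟩ := hs x
    have hβpM : β ^ p ∈ M := hM0 ⟨β, rfl⟩
    set xp : ↥K := eqv ⟨β ^ p, hβpM⟩ with hxpdef
    have hxp : (algebraMap ↥K L) xp = x ^ p := by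
      rw [hxpdef, heqv]
      show ψ (β ^ p) = x ^ p
      rw [map_pow, hβ]
    have hmin : minpoly ↥K x = X ^ p - C xp := by
      refine (minpoly.eq_of_irreducible_of_monic ?_ ?_ ?_).symm
      · refine X_pow_sub_C_irreducible_of_prime hp fun b hb => hxK ?_
        have hcoe : (↑b : L) ^ p = x ^ p := by
          rw [← hxp, ← hb, map_pow, IntermediateField.algebraMap_apply]
        have : ((↑b : L) - x) ^ p = 0 := by
          rw [sub_pow_char, hcoe, sub_self]
        have hbx : (↑b : L) = x :=
          sub_eq_zero.1 (pow_eq_zero_iff hp.ne_zero |>.1 this)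
        rw [← hbx]
        exact b.2
      · rw [map_sub, map_pow, aeval_X, aeval_C, hxp, sub_self]
      · exact monic_X_pow_sub_C xp hp.ne_zero
    have haevm : Polynomial.aeval β ((minpoly ↥K x).map eqv.symm.toAlgHom.toRingHom) = 0 := by
      rw [hmin, Polynomial.map_sub, Polynomial.map_pow, Polynomial.map_X, Polynomial.map_C]
      rw [map_sub, map_pow, aeval_X, aeval_C]
      have hsymm : eqv.symm.toAlgHom.toRingHom xp = (⟨β ^ p, hβpM⟩ : ↥M) := by
        show eqv.symm xp = _
        rw [hxpdef, eqv.symm_apply_apply]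
      rw [hsymm]
      rw [show (algebraMap ↥M B) ⟨β ^ p, hβpM⟩ = β ^ p from rfl, sub_self]
    have hbM : β ∉ M := fun h => hx β h hβ
    have hkill := killAeval ψ M K eqv heqv x β hβ haevm
    obtain ⟨C', hC'good, hlt⟩ := stepGood ψ hu M β hbM hkill
    exact hlt.2 (hMmax C' hC'good hlt.1)

end CoeffField2

theorem isReduced_of_local (k R : Type) [Field k] [PerfectField k] [CommRing R]
    [IsLocalRing R] [IsNoetherianRing R] [Algebra k R]
    [Algebra.FormallyUnramified k R] : IsReduced R := by
  set m : Ideal R := IsLocalRing.maximalIdeal R with hmdef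
  haveI : m.IsMaximal := IsLocalRing.maximalIdeal.isMaximal R
  letI : Field (R ⧸ m) := Ideal.Quotient.field m
  set ψ : (R ⧸ m ^ 2) →ₐ[k] (R ⧸ m) :=
    Ideal.Quotient.liftₐ (m ^ 2) (Ideal.Quotient.mkₐ k m)
      (fun a ha => by
        rw [Ideal.Quotient.mkₐ_eq_mk, Ideal.Quotient.eq_zero_iff_mem]
        exact Ideal.pow_le_self two_ne_zero ha) with hψ
  have hψmk : ∀ r : R, ψ (Ideal.Quotient.mk (m ^ 2) r) = Ideal.Quotient.mk m r := by
    intro r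
    simp [hψ]
    rfl
  have hs : Function.Surjective ψ := by
    intro y
    obtain ⟨r, rfl⟩ := Ideal.Quotient.mk_surjective y
    exact ⟨Ideal.Quotient.mk _ r, hψmk r⟩
  have hker : ∀ a b : R ⧸ m ^ 2, ψ a = 0 → ψ b = 0 → a * b = 0 := by
    intro a b ha hb
    obtain ⟨a', rfl⟩ := Ideal.Quotient.mk_surjective a
    obtain ⟨b', rfl⟩ := Ideal.Quotient.mk_surjective b
    rw [hψmk, Ideal.Quotient.eq_zero_iff_mem] at ha hb
    rw [← map_mul, Ideal.Quotient.eq_zero_iff_mem, pow_two]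
    exact Ideal.mul_mem_mul ha hb
  have hu : ∀ b : R ⧸ m ^ 2, ψ b ≠ 0 → IsUnit b := by
    intro b hb
    obtain ⟨b', rfl⟩ := Ideal.Quotient.mk_surjective b
    have hnm : b' ∉ m := fun h => hb (by rw [hψmk, Ideal.Quotient.eq_zero_iff_mem]; exact h)
    have hub' : IsUnit b' := by
      by_contra hnu
      exact hnm ((IsLocalRing.mem_maximalIdeal b').2 hnu)
    exact hub'.map (Ideal.Quotient.mk (m ^ 2))
  obtain ⟨s, hsec⟩ := exists_algSection ψ hs hker hu
  set f₁ : R →ₐ[k] R ⧸ m ^ 2 := Ideal.Quotient.mkₐ k (m ^ 2) with hf₁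
  set f₂ : R →ₐ[k] R ⧸ m ^ 2 := s.comp (Ideal.Quotient.mkₐ k m) with hf₂
  have hI2 : (RingHom.ker ψ : Ideal (R ⧸ m ^ 2)) ^ 2 = ⊥ := by
    rw [pow_two (RingHom.ker ψ), eq_bot_iff]
    refine Ideal.mul_le.2 fun a ha b hb => ?_
    rw [Ideal.mem_bot]
    exact hker a b (RingHom.mem_ker.1 ha) (RingHom.mem_ker.1 hb)
  have heq : f₁ = f₂ := by
    apply Algebra.FormallyUnramified.comp_injective (R := k) (A := R) (RingHom.ker ψ) hI2
    ext r
    show Ideal.Quotient.mk (RingHom.ker ψ) (f₁ r) = Ideal.Quotient.mk (RingHom.ker ψ) (f₂ r)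
    rw [Ideal.Quotient.eq]
    have hv : ψ (f₁ r) = ψ (f₂ r) := by
      have h1 : ψ (f₁ r) = Ideal.Quotient.mk m r := hψmk r
      have h2 : ψ (f₂ r) = Ideal.Quotient.mk m r := by
        show ψ (s (Ideal.Quotient.mkₐ k m r)) = _
        rw [hsec, Ideal.Quotient.mkₐ_eq_mk]
      rw [h1, h2]
    rw [RingHom.mem_ker, map_sub, hv, sub_self]
  have hle : m ≤ m ^ 2 := by
    intro x hxm
    have h1 : f₁ x = 0 := by
      rw [heq]
      show s (Ideal.Quotient.mkₐ k m x) = 0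
      have h0 : Ideal.Quotient.mkₐ k m x = 0 := by
        rw [Ideal.Quotient.mkₐ_eq_mk, Ideal.Quotient.eq_zero_iff_mem]
        exact hxm
      rw [h0, map_zero]
    rwa [show f₁ x = Ideal.Quotient.mk (m ^ 2) x from rfl,
      Ideal.Quotient.eq_zero_iff_mem] at h1
  have hbot : m = ⊥ := by
    refine Submodule.eq_bot_of_le_smul_of_le_jacobson_bot m m (IsNoetherian.noetherian m) ?_ ?_
    · rwa [smul_eq_mul, ← pow_two]
    · rw [IsLocalRing.jacobson_eq_maximalIdeal ⊥ bot_ne_top]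
  have hf : IsField R := IsLocalRing.isField_iff_maximalIdeal_eq.2 hbot
  letI := hf.toField
  infer_instance

/-- Corollary 3.3(i): if `k` is a perfect field and `A` is a `k`-algebra whose
localization at every maximal ideal is Noetherian, then `Ω_{A/k} = 0`
implies `A` is reduced. -/
theorem stmt11 (k : Type) [Field k] [PerfectField k]
    (A : Type) [CommRing A] [Algebra k A]
    (hloc : ∀ (m : Ideal A) (hm : m.IsMaximal),
      letI := hm.isPrime; IsNoetherianRing (Localization.AtPrime m))
    (homega : Subsingleton (KaehlerDifferential k A)) :
    IsReduced A := by
  haveI : Algebra.FormallyUnramified k A := ⟨homega⟩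
  apply isReduced_ofLocalizationMaximal
  intro J hJ
  haveI := hJ.isPrime
  haveI : IsNoetherianRing (Localization.AtPrime J) := hloc J hJ
  haveI : Algebra.FormallyUnramified A (Localization.AtPrime J) :=
    Algebra.FormallyUnramified.of_isLocalization J.primeCompl
  haveI : Algebra.FormallyUnramified k (Localization.AtPrime J) :=
    Algebra.FormallyUnramified.comp k A (Localization.AtPrime J)
  exact isReduced_of_local k (Localization.AtPrime J)
end

section
/- Let L = F_p(x), let k = F_p(x^{1/p^∞}) be its perfection, and let A = k[Z]/(Z²) viewed as an L-algebra via φ(f) = f + f'·z. Then A is a non-reduced Noetherian local ring with Ω_{A/L} = 0. -/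
section Aux

variable (p : ℕ) [Fact p.Prime] (k : Type*) [Field k]

local notation "AA" => Polynomial k ⧸ Ideal.span {(Polynomial.X : Polynomial k) ^ 2}

theorem aux_z_ne_zero : (Ideal.Quotient.mk _ (Polynomial.X : Polynomial k) : AA) ≠ 0 := by
  rw [Ne, Ideal.Quotient.eq_zero_iff_mem, Ideal.mem_span_singleton]
  intro h
  have := Polynomial.natDegree_le_of_dvd h Polynomial.X_ne_zero
  simp [Polynomial.natDegree_X_pow] at this

theorem aux_z_sq : (Ideal.Quotient.mk _ (Polynomial.X : Polynomial k) : AA) ^ 2 = 0 := by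
  rw [← map_pow, Ideal.Quotient.eq_zero_iff_mem]
  exact Ideal.mem_span_singleton_self _

theorem aux_not_reduced : ¬ IsReduced AA := by
  intro h
  exact aux_z_ne_zero k (h.eq_zero _ ⟨2, aux_z_sq k⟩)

instance aux_nontrivial : Nontrivial AA := by
  refine Ideal.Quotient.nontrivial_iff.mpr ?_
  rw [Ne, Ideal.span_singleton_eq_top]
  intro h
  rw [sq] at h
  exact Polynomial.not_isUnit_X (isUnit_of_mul_isUnit_left h)

theorem aux_local : IsLocalRing AA := by
  refine IsLocalRing.of_isUnit_or_isUnit_one_sub_self fun a => ?_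
  obtain ⟨q, rfl⟩ := Ideal.Quotient.mk_surjective a
  set c := q.coeff 0 with hc
  have hq : (Ideal.Quotient.mk _ q : AA) =
      Ideal.Quotient.mk _ (Polynomial.C c) + Ideal.Quotient.mk _ (Polynomial.X * q.divX) := by
    rw [← map_add, add_comm]
    exact congrArg _ (Polynomial.X_mul_divX_add q).symm
  have hnil : (Ideal.Quotient.mk (Ideal.span {(Polynomial.X : Polynomial k) ^ 2})
      (Polynomial.X * q.divX)) ^ 2 = 0 := by
    rw [← map_pow, Ideal.Quotient.eq_zero_iff_mem, mul_pow, Ideal.mem_span_singleton]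
    exact Dvd.intro _ rfl
  by_cases h0 : c = 0
  · right
    rw [hq, h0, Polynomial.C_0, map_zero, zero_add]
    exact IsNilpotent.isUnit_one_sub ⟨2, hnil⟩
  · left
    rw [hq]
    have key : (Ideal.Quotient.mk _ (Polynomial.C c) : AA) +
        Ideal.Quotient.mk _ (Polynomial.X * q.divX) =
        Ideal.Quotient.mk _ (Polynomial.C c) *
          (1 + Ideal.Quotient.mk _ (Polynomial.C c⁻¹) *
            Ideal.Quotient.mk _ (Polynomial.X * q.divX)) := by
      rw [mul_add, mul_one, ← mul_assoc, ← map_mul, ← Polynomial.C_mul,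
        mul_inv_cancel₀ h0, Polynomial.C_1, map_one, one_mul]
    rw [key]
    refine IsUnit.mul ((Polynomial.isUnit_C.mpr (isUnit_iff_ne_zero.mpr h0)).map _) ?_
    rw [add_comm]
    exact IsNilpotent.isUnit_add_one ⟨2, by rw [mul_pow, hnil, mul_zero]⟩

end Aux

section Kaehler

variable (p : ℕ) (k : Type*) [Field k]

local notation "AA" => Polynomial k ⧸ Ideal.span {(Polynomial.X : Polynomial k) ^ 2}

set_option synthInstance.maxHeartbeats 1000000 in
theorem aux_kaehler [Fact p.Prime] [CharP k p] [PerfectRing k p]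
    (L : Type*) [CommRing L] [Algebra L (Polynomial k ⧸ Ideal.span {(Polynomial.X : Polynomial k) ^ 2})]
    (h : ∃ (t : L) (s : k), (Ideal.Quotient.mk _ (Polynomial.X : Polynomial k) : AA) =
      algebraMap L AA t - algebraMap k AA s) :
    Subsingleton (KaehlerDifferential L AA) := by
  haveI : SMulCommClass L L AA := ⟨fun a b x => by rw [Algebra.smul_def, Algebra.smul_def, Algebra.smul_def, Algebra.smul_def, mul_left_comm]⟩
  have hpA : ((p : ℕ) : AA) = 0 := by
    rw [← map_natCast (Ideal.Quotient.mk (Ideal.span {(Polynomial.X : Polynomial k) ^ 2})),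
      ← map_natCast (Polynomial.C : k →+* Polynomial k), CharP.cast_eq_zero, map_zero, map_zero]
  set D := KaehlerDifferential.D L AA with hDdef
  have hsm : ∀ c : k, D (algebraMap k AA c) = 0 := by
    intro c
    obtain ⟨b, hb⟩ := surjective_frobenius k p c
    have hcb : algebraMap k AA c = (algebraMap k AA b) ^ p := by
      rw [← hb, frobenius_def, map_pow]
    rw [hcb, Derivation.leibniz_pow, ← Nat.cast_smul_eq_nsmul AA p, hpA]
    exact zero_smul (A := KaehlerDifferential L AA) AA _
  have hCmk : ∀ c : k, (Ideal.Quotient.mk (Ideal.span {(Polynomial.X : Polynomial k) ^ 2})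
      (Polynomial.C c) : AA) = algebraMap k AA c := fun c => by
    rw [← Polynomial.algebraMap_eq, Ideal.Quotient.mk_algebraMap]
  have hz : D (Ideal.Quotient.mk _ (Polynomial.X : Polynomial k)) = 0 := by
    obtain ⟨t, s, hts⟩ := h
    rw [hts, map_sub, Derivation.map_algebraMap, hsm, sub_zero]
  have key : ∀ a : AA, D a = 0 := by
    intro a
    obtain ⟨q, rfl⟩ := Ideal.Quotient.mk_surjective a
    induction q using Polynomial.induction_on with
    | C c => rw [hCmk]; exact hsm c
    | add q r hq hr => rw [map_add, map_add, hq, hr, add_zero]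
    | monomial n c hc =>
      have : (Ideal.Quotient.mk (Ideal.span {(Polynomial.X : Polynomial k) ^ 2})
          (Polynomial.C c * Polynomial.X ^ (n + 1)) : AA) =
          Ideal.Quotient.mk _ (Polynomial.C c * Polynomial.X ^ n) *
            Ideal.Quotient.mk _ (Polynomial.X : Polynomial k) := by
        rw [← map_mul]
        congr 1
        ring
      rw [this, Derivation.leibniz, hz, hc, smul_zero, smul_zero, add_zero]
  refine subsingleton_of_forall_eq 0 fun y => ?_
  have hy : y ∈ Submodule.span AA (Set.range D) := by
    rw [hDdef, KaehlerDifferential.span_range_derivation]; trivial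
  rw [Submodule.span_eq_bot.mpr (by rintro x ⟨a, rfl⟩; exact key a)] at hy
  simpa using hy

end Kaehler

set_option synthInstance.maxHeartbeats 1000000 in
/-- Example 3.2: with `L = 𝔽_p(x)`, `k` the perfection of `L`,
`A = k[Z]/(Z²)` regarded as an `L`-algebra via `f ↦ f + f'·z` (where `D`
is `d/dx`, the unique `𝔽_p`-derivation of `L` with `D x = 1`), the ring `A`
is a non-reduced Noetherian local ring with `Ω_{A/L} = 0`. -/
theorem stmt14 (p : ℕ) [Fact p.Prime] [CharP (RatFunc (ZMod p)) p]
    (D : Derivation (ZMod p) (RatFunc (ZMod p)) (RatFunc (ZMod p)))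
    (hD : D RatFunc.X = 1)
    [alg : Algebra (RatFunc (ZMod p))
        (Polynomial (PerfectClosure (RatFunc (ZMod p)) p) ⧸
          Ideal.span {(Polynomial.X :
            Polynomial (PerfectClosure (RatFunc (ZMod p)) p)) ^ 2})]
    (halg : ∀ f : RatFunc (ZMod p),
      algebraMap (RatFunc (ZMod p))
          (Polynomial (PerfectClosure (RatFunc (ZMod p)) p) ⧸
            Ideal.span {(Polynomial.X :
              Polynomial (PerfectClosure (RatFunc (ZMod p)) p)) ^ 2}) f =
        algebraMap (PerfectClosure (RatFunc (ZMod p)) p) _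
            (PerfectClosure.of (RatFunc (ZMod p)) p f)
        + algebraMap (PerfectClosure (RatFunc (ZMod p)) p) _
            (PerfectClosure.of (RatFunc (ZMod p)) p (D f))
          * Ideal.Quotient.mk _ (Polynomial.X :
              Polynomial (PerfectClosure (RatFunc (ZMod p)) p))) :
    ¬ IsReduced (Polynomial (PerfectClosure (RatFunc (ZMod p)) p) ⧸
        Ideal.span {(Polynomial.X :
          Polynomial (PerfectClosure (RatFunc (ZMod p)) p)) ^ 2}) ∧
    IsNoetherianRing (Polynomial (PerfectClosure (RatFunc (ZMod p)) p) ⧸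
        Ideal.span {(Polynomial.X :
          Polynomial (PerfectClosure (RatFunc (ZMod p)) p)) ^ 2}) ∧
    IsLocalRing (Polynomial (PerfectClosure (RatFunc (ZMod p)) p) ⧸
        Ideal.span {(Polynomial.X :
          Polynomial (PerfectClosure (RatFunc (ZMod p)) p)) ^ 2}) ∧
    Subsingleton (KaehlerDifferential (RatFunc (ZMod p))
        (Polynomial (PerfectClosure (RatFunc (ZMod p)) p) ⧸
          Ideal.span {(Polynomial.X :
            Polynomial (PerfectClosure (RatFunc (ZMod p)) p)) ^ 2})) := by
  refine ⟨aux_not_reduced _, inferInstance, aux_local _, ?_⟩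
  refine aux_kaehler p _ _ ⟨RatFunc.X,
    PerfectClosure.of (RatFunc (ZMod p)) p RatFunc.X, ?_⟩
  rw [halg, hD, map_one, map_one, one_mul, add_sub_cancel_left]
end

section
/- Let k be a perfect field of characteristic p > 0 and k ⊆ K a field extension. For x ∈ K, one has dx = 0 in Ω_{K/k} if and only if x has a p-th root in K. -/
open Polynomial IntermediateField

lemma aux_integral {K : Type} [Field K] {p : ℕ} (hp : 0 < p) (M : Subfield K)
    (hM : ∀ z : K, z ^ p ∈ M) (z : K) : IsIntegral M z := by
  refine ⟨X ^ p - C ⟨z ^ p, hM z⟩, (monic_X_pow p).sub_of_left ?_, ?_⟩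
  · simpa [degree_X_pow] using (degree_C_le).trans_lt (by exact_mod_cast hp)
  · simp only [eval₂_sub, eval₂_X_pow, eval₂_C]
    exact sub_eq_zero_of_eq rfl

lemma aux_minpoly {K : Type} [Field K] {p : ℕ} [Fact p.Prime] [CharP K p] (M : Subfield K)
    (hM : ∀ z : K, z ^ p ∈ M) (z : K) (hz : z ∉ M) :
    minpoly M z = X ^ p - C ⟨z ^ p, hM z⟩ := by
  have hp : 0 < p := (Fact.out : p.Prime).pos
  set c : M := ⟨z ^ p, hM z⟩
  have hf_monic : (X ^ p - C c).Monic := by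
    refine (monic_X_pow p).sub_of_left ?_
    simpa [degree_X_pow] using (degree_C_le).trans_lt (by exact_mod_cast hp)
  have haf : aeval z (X ^ p - C c) = 0 := by
    simp only [map_sub, aeval_X_pow, aeval_C]
    exact sub_eq_zero_of_eq rfl
  have hint : IsIntegral M z := ⟨_, hf_monic, by simpa [aeval_def] using haf⟩
  have hdvd : minpoly M z ∣ X ^ p - C c := minpoly.dvd M z haf
  set g := minpoly M z
  let ι := algebraMap M K
  have hmap : (X ^ p - C c).map ι = (X - C z) ^ p := by
    rw [Polynomial.map_sub, Polynomial.map_pow, map_X, map_C]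
    rw [sub_pow_char]
    rw [← C_pow]
    congr 1
  have hgdvd : g.map ι ∣ (X - C z) ^ p := by
    rw [← hmap]; exact Polynomial.map_dvd ι hdvd
  obtain ⟨m, hmle, hassoc⟩ := (dvd_prime_pow (prime_X_sub_C z) p).mp hgdvd
  have hgpow : g.map ι = (X - C z) ^ m :=
    eq_of_monic_of_associated ((minpoly.monic hint).map ι) ((monic_X_sub_C z).pow m) hassoc
  have hdeg : g.natDegree = m := by
    rw [← g.natDegree_map ι, hgpow, natDegree_pow, natDegree_X_sub_C, mul_one]
  have hm : m = p := by
    by_contra hne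
    have hmlt : m < p := lt_of_le_of_ne hmle hne
    have hm1 : 1 ≤ m := by
      rw [← hdeg]; exact minpoly.natDegree_pos hint
    have h1 : (g.map ι).nextCoeff = m • (-z) := by
      rw [hgpow]
      rw [Monic.nextCoeff_pow (monic_X_sub_C z)]
      simp [nextCoeff_X_sub_C]
    have h2 : (g.map ι).nextCoeff = ι g.nextCoeff := by
      rw [nextCoeff_map (algebraMap M K).injective]
    have hz' : z ∈ M := by
      have hcast : (m : K) ≠ 0 := by
        rw [Ne, CharP.cast_eq_zero_iff K p]
        exact Nat.not_dvd_of_pos_of_lt hm1 hmlt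
      have : (m : K) * z = - ι g.nextCoeff := by
        rw [← h2, h1]; push_cast; ring
      have hzeq : z = - ι g.nextCoeff / (m : K) := by
        field_simp [hcast] at this ⊢; linear_combination this
      rw [hzeq]
      exact Subfield.div_mem M (Subfield.neg_mem M (g.nextCoeff).2) (natCast_mem M m)
    exact hz hz'
  have hdeg2 : g.natDegree = (X ^ p - C c).natDegree := by
    rw [hdeg, hm, natDegree_X_pow_sub_C]
  exact (eq_of_monic_of_dvd_of_natDegree_le (minpoly.monic hint) hf_monic hdvd hdeg2.ge).symm

set_option maxHeartbeats 1000000 in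
set_option synthInstance.maxHeartbeats 400000 in
lemma aux_der {K : Type} [Field K] {p : ℕ} [Fact p.Prime] [CharP K p] (M : Subfield K)
    (hMpow : ∀ z : K, z ^ p ∈ M) (x : K) (hxM : x ∉ M)
    (hmax : ∀ N : Subfield K, M ≤ N → x ∉ N → N ≤ M) :
    ∃ d : Derivation M K K, d x = 1 := by
  have hp : p.Prime := Fact.out
  -- finrank of simple extensions
  have hfin : ∀ z : K, z ∉ M → Module.finrank M (M⟮z⟯ : IntermediateField M K) = p := by
    intro z hz
    rw [IntermediateField.adjoin.finrank (aux_integral hp.pos M hMpow z),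
      aux_minpoly M hMpow z hz, natDegree_X_pow_sub_C]
  -- maximality : adjoining any z ∉ M captures x
  have hmax' : ∀ z : K, z ∉ M → x ∈ (M⟮z⟯ : IntermediateField M K) := by
    intro z hz
    set N : Subfield K := (M⟮z⟯ : IntermediateField M K).toSubfield with hNdef
    have hMN : M ≤ N := by
      intro a ha
      exact (M⟮z⟯ : IntermediateField M K).algebraMap_mem ⟨a, ha⟩
    by_contra hxN
    have : N ≤ M := hmax N hMN hxN
    exact hz (this (IntermediateField.subset_adjoin M {z} rfl))
  -- K = M(x)
  have htop : (M⟮x⟯ : IntermediateField M K) = ⊤ := by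
    rw [eq_top_iff]
    intro z _
    by_cases hzM : z ∈ M
    · exact (M⟮x⟯ : IntermediateField M K).algebraMap_mem ⟨z, hzM⟩
    · haveI : FiniteDimensional M (M⟮z⟯ : IntermediateField M K) :=
        IntermediateField.adjoin.finiteDimensional (aux_integral hp.pos M hMpow z)
      have hle : (M⟮x⟯ : IntermediateField M K) ≤ M⟮z⟯ :=
        IntermediateField.adjoin_simple_le_iff.mpr (hmax' z hzM)
      have heq : (M⟮x⟯ : IntermediateField M K) = M⟮z⟯ :=
        IntermediateField.eq_of_le_of_finrank_eq hle (by rw [hfin x hxM, hfin z hzM])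
      rw [heq]
      exact IntermediateField.mem_adjoin_simple_self M z
  -- aeval x : M[X] → K is surjective
  have hsurj : Function.Surjective (aeval x : (M : Subfield K)[X] →ₐ[M] K) := by
    intro z
    have hz : z ∈ Algebra.adjoin (M : Subfield K) ({x} : Set K) := by
      rw [← IntermediateField.adjoin_simple_toSubalgebra_of_isAlgebraic
        (aux_integral hp.pos M hMpow x).isAlgebraic, htop]
      trivial
    rw [Algebra.adjoin_singleton_eq_range_aeval] at hz
    exact hz
  -- derivative of relations vanish
  have hker : ∀ g : (M : Subfield K)[X], aeval x g = 0 → aeval x (derivative g) = 0 := by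
    intro g hg
    obtain ⟨h, rfl⟩ := minpoly.dvd M x hg
    have hμ : derivative (minpoly M x) = 0 := by
      rw [aux_minpoly M hMpow x hxM, derivative_sub, derivative_X_pow, derivative_C,
        CharP.cast_eq_zero (M : Subfield K) p]
      simp
    rw [derivative_mul, hμ, zero_mul, zero_add, map_mul, minpoly.aeval, zero_mul]
  refine ⟨Derivation.liftOfSurjective (f := (aeval x : (M : Subfield K)[X] →ₐ[M] K))
      hsurj (d := derivative') hker, ?_⟩
  have := Derivation.liftOfSurjective_apply (f := (aeval x : (M : Subfield K)[X] →ₐ[M] K))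
    hsurj (d := derivative') hker X
  simpa using this

set_option maxHeartbeats 1000000 in
set_option synthInstance.maxHeartbeats 400000 in
/-- The lemma quoted in Corollary 3.3: over a perfect field `k` of
characteristic `p > 0`, an element `x` of a field extension `K` of `k`
satisfies `dx = 0` in `Ω_{K/k}` iff `x` has a `p`-th root in `K`. -/
theorem stmt15 (p : ℕ) [Fact p.Prime]
    (k : Type) [Field k] [CharP k p] [PerfectField k]
    (K : Type) [Field K] [Algebra k K] (x : K) :
    KaehlerDifferential.D k K x = 0 ↔ ∃ y : K, y ^ p = x := by
  haveI : CharP K p := charP_of_injective_algebraMap (algebraMap k K).injective p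
  have hp : p.Prime := Fact.out
  constructor
  · intro hD
    by_contra hnr
    push_neg at hnr
    -- the subfield of p-th powers
    set L : Subfield K := (frobenius K p).fieldRange with hLdef
    have hxL : x ∉ L := by
      rintro ⟨y, hy⟩
      exact hnr y hy
    -- Zorn: a maximal subfield containing L but not x
    obtain ⟨M, -, hMs, hMmax⟩ := zorn_le_nonempty₀
      {N : Subfield K | L ≤ N ∧ x ∉ N}
      (fun c hcs hchain y hy => by
        refine ⟨sSup c, ⟨le_trans (hcs hy).1 (le_sSup hy), ?_⟩, fun z hz => le_sSup hz⟩
        rw [Subfield.mem_sSup_of_directedOn ⟨y, hy⟩ hchain.directedOn]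
        rintro ⟨N, hNc, hxN⟩
        exact (hcs hNc).2 hxN)
      L ⟨le_rfl, hxL⟩
    have hxM : x ∉ M := hMs.2
    have hMpow : ∀ z : K, z ^ p ∈ M := fun z => hMs.1 ⟨z, rfl⟩
    obtain ⟨d, hdx⟩ := aux_der M hMpow x hxM
      (fun N hMN hxN => hMmax ⟨le_trans hMs.1 hMN, hxN⟩ hMN)
    have hd0 : ∀ a : k, d (algebraMap k K a) = 0 := by
      intro a
      obtain ⟨b, hb⟩ := surjective_frobenius k p a
      have hmem : algebraMap k K a ∈ M := by
        apply hMs.1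
        exact ⟨algebraMap k K b, by rw [frobenius_def, ← map_pow, ← frobenius_def, hb]⟩
      have : algebraMap k K a = algebraMap M K ⟨algebraMap k K a, hmem⟩ := rfl
      rw [this, d.map_algebraMap]
    -- repackage as k-derivation
    set δ : Derivation k K K :=
      { toFun := fun y => d y
        map_add' := fun a b => d.map_add a b
        map_smul' := fun a y => by
          simp only [RingHom.id_apply]
          rw [Algebra.smul_def, d.leibniz, hd0, smul_zero, add_zero, smul_eq_mul]
          exact (Algebra.smul_def a (d y)).symm
        map_one_eq_zero' := d.map_one_eq_zero
        leibniz' := fun a b => d.leibniz a b } with hδ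
    have h1 : δ.liftKaehlerDifferential (KaehlerDifferential.D k K x) = δ x :=
      Derivation.liftKaehlerDifferential_comp_D δ x
    rw [hD, map_zero] at h1
    have h2 : δ x = 1 := hdx
    rw [h2] at h1
    exact one_ne_zero h1.symm
  · rintro ⟨y, rfl⟩
    rw [Derivation.leibniz_pow, ← Nat.cast_smul_eq_nsmul K, CharP.cast_eq_zero, zero_smul]
end

section
/- Let R = ⊕_{n∈ℕ} R_n be an ℕ-graded ring containing a field of characteristic zero. Then the kernel of the universal derivation d : R → Ω_{R/R_0} is exactly R_0. -/
section Euler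
variable {R : Type} [CommRing R] (𝒜 : ℕ → AddSubgroup R) [GradedRing 𝒜]

noncomputable def eulerHom : R →+ R :=
  (DirectSum.toAddMonoid (fun n => n • (𝒜 n).subtype)).comp
    (DirectSum.decomposeAddEquiv 𝒜).toAddMonoidHom

lemma eulerHom_of_mem {n : ℕ} {x : R} (hx : x ∈ 𝒜 n) : eulerHom 𝒜 x = n • x := by
  simp only [eulerHom, AddMonoidHom.comp_apply, AddEquiv.coe_toAddMonoidHom,
    DirectSum.decomposeAddEquiv_apply, DirectSum.decompose_of_mem 𝒜 hx,
    DirectSum.toAddMonoid_of]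
  rfl

lemma eulerHom_mul (x y : R) :
    eulerHom 𝒜 (x * y) = x * eulerHom 𝒜 y + eulerHom 𝒜 x * y := by
  induction x using DirectSum.Decomposition.inductionOn 𝒜 with
  | zero => simp
  | homogeneous m =>
    obtain ⟨a, ha⟩ := m
    induction y using DirectSum.Decomposition.inductionOn 𝒜 with
    | zero => simp
    | homogeneous m' =>
      obtain ⟨b, hb⟩ := m'
      rw [eulerHom_of_mem 𝒜 (SetLike.mul_mem_graded ha hb), eulerHom_of_mem 𝒜 ha,
        eulerHom_of_mem 𝒜 hb, add_smul, smul_mul_assoc, mul_smul_comm, add_comm]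
    | add b b' hb hb' =>
      rw [mul_add, map_add, hb, hb', map_add]
      ring
  | add a a' ha' hb' =>
    rw [add_mul, map_add, ha', hb', map_add]
    ring

/-- The Euler derivation of an `ℕ`-graded ring over its degree-zero subring. -/
noncomputable def eulerDerivation : Derivation (SetLike.GradeZero.subring 𝒜) R R where
  toFun := eulerHom 𝒜
  map_add' := map_add _
  map_smul' r x := by
    have hr : (r : R) ∈ 𝒜 0 := r.2
    show eulerHom 𝒜 (r • x) = r • eulerHom 𝒜 x
    rw [show r • x = (r : R) * x from rfl, eulerHom_mul, eulerHom_of_mem 𝒜 hr,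
      zero_smul, zero_mul, add_zero]
    rfl
  map_one_eq_zero' := by
    simp only [LinearMap.coe_mk, AddHom.coe_mk]
    rw [eulerHom_of_mem 𝒜 (SetLike.one_mem_graded 𝒜), zero_smul]
  leibniz' a b := by
    simp only [LinearMap.coe_mk, AddHom.coe_mk, smul_eq_mul]
    rw [eulerHom_mul]
    ring

lemma eulerHom_decompose (x : R) (n : ℕ) :
    (DirectSum.decompose 𝒜 (eulerHom 𝒜 x) n : R) = n • (DirectSum.decompose 𝒜 x n : R) := by
  induction x using DirectSum.Decomposition.inductionOn 𝒜 with
  | zero => simp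
  | homogeneous m =>
    rename_i i
    obtain ⟨a, ha⟩ := m
    have hia : (i : ℕ) • a ∈ 𝒜 i := nsmul_mem ha i
    rw [eulerHom_of_mem 𝒜 ha]
    rcases eq_or_ne i n with rfl | h
    · rw [DirectSum.decompose_of_mem_same 𝒜 hia, DirectSum.decompose_of_mem_same 𝒜 ha]
    · rw [DirectSum.decompose_of_mem_ne 𝒜 hia h, DirectSum.decompose_of_mem_ne 𝒜 ha h,
        smul_zero]
  | add a b ha hb =>
    rw [map_add, DirectSum.decompose_add, DirectSum.decompose_add]
    simp only [DirectSum.add_apply, AddSubgroup.coe_add, ha, hb, smul_add]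

end Euler

/-- Proposition 3.8(i): if `R` is an `ℕ`-graded ring containing a field of
characteristic zero, the kernel of the universal derivation
`d : R → Ω_{R/R₀}` is exactly `R₀`. -/
theorem stmt17 (R : Type) [CommRing R] (𝒜 : ℕ → AddSubgroup R) [GradedRing 𝒜]
    (k : Type) [Field k] [CharZero k] (i : k →+* R) (x : R) :
    KaehlerDifferential.D (SetLike.GradeZero.subring 𝒜) R x = 0 ↔ x ∈ 𝒜 0 := by
  constructor
  · intro h
    classical
    have hE : eulerHom 𝒜 x = 0 := by
      have h1 := (eulerDerivation 𝒜).liftKaehlerDifferential_comp_D x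
      rw [h, map_zero] at h1
      exact h1.symm
    have hcomp : ∀ n : ℕ, n ≠ 0 → (DirectSum.decompose 𝒜 x n : R) = 0 := by
      intro n hn
      have h1 : (n : ℕ) • (DirectSum.decompose 𝒜 x n : R) = 0 := by
        rw [← eulerHom_decompose, hE]
        simp
      have hu : i ((n : k)⁻¹) * (n : R) = 1 := by
        rw [← map_natCast i n, ← map_mul, inv_mul_cancel₀ (Nat.cast_ne_zero.mpr hn), map_one]
      calc (DirectSum.decompose 𝒜 x n : R)
          = (i ((n : k)⁻¹) * (n : R)) * (DirectSum.decompose 𝒜 x n : R) := by rw [hu, one_mul]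
        _ = i ((n : k)⁻¹) * ((n : ℕ) • (DirectSum.decompose 𝒜 x n : R)) := by
            rw [nsmul_eq_mul, mul_assoc]
        _ = 0 := by rw [h1, mul_zero]
    rw [← DirectSum.sum_support_decompose 𝒜 x]
    apply sum_mem
    intro n _
    rcases eq_or_ne n 0 with rfl | hn
    · exact (DirectSum.decompose 𝒜 x 0).2
    · rw [hcomp n hn]
      exact zero_mem _
  · intro hx
    have : x = algebraMap (SetLike.GradeZero.subring 𝒜) R ⟨x, hx⟩ := rfl
    rw [this, Derivation.map_algebraMap]
end
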